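/- arXiv:1610.02107 — 3 statements merged into one kernel-verified Lean document; each statement's English description precedes it below -/
import Mathlib

section
/- Let Σ be a signed graph on a circle C with two noncrossing chords c1 and c2, and let e be an edge of C lying on the segment of C between the two chords (so the segment containing e is not a handle). Then e does not lie in a unique negative circle, and e does not lie in a unique positive circle. -/
open SimpleGraph Finset

variable {V : Type*} [DecidableEq V]

/-- The sign (product of edge signs) of a finite set of edges. -/
def esign (σ : Sym2 V → ℤˣ) (s : Finset (Sym2 V)) : ℤˣ := ∏ e ∈ s, σ e

/-- The sign of a walk: the product of the signs of its edges. -/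
def wsign (σ : Sym2 V → ℤˣ) {G : SimpleGraph V} {u v : V} (w : G.Walk u v) : ℤˣ :=
  (w.edges.map σ).prod

/-- `s` is the edge set of a circle (cycle) of `G`. -/
def IsCircleOf (G : SimpleGraph V) (s : Finset (Sym2 V)) : Prop :=
  ∃ (a : V) (w : G.Walk a a), w.IsCycle ∧ w.edges.toFinset = s

/-- The signature obtained from `σ` by switching with `ζ`. -/
def switchSign (σ : Sym2 V → ℤˣ) (ζ : V → ℤˣ) : Sym2 V → ℤˣ :=
  fun e => Sym2.lift ⟨fun a b => ζ a * σ s(a, b) * ζ b, by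
    intro a b
    simp only []
    rw [Sym2.eq_swap]
    simp [mul_comm, mul_assoc, mul_left_comm]⟩ e

/-- `b` is a balancing edge: one can switch so that `b` is the unique negative edge. -/
def IsBalancingEdge (G : SimpleGraph V) (σ : Sym2 V → ℤˣ) (b : Sym2 V) : Prop :=
  b ∈ G.edgeSet ∧ ∃ ζ : V → ℤˣ, ∀ f ∈ G.edgeSet, (switchSign σ ζ f = -1 ↔ f = b)

/-- `F` is the edge set of a bridge of the circle `w` in `G`: either a single
chord of `w`, or the edge set attached to a connected component of `G` minus
the vertices of `w`. -/
def IsBridgeOf {a : V} (G : SimpleGraph V) (w : G.Walk a a) (F : Set (Sym2 V)) : Prop :=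
  (∃ x y : V, x ≠ y ∧ x ∈ w.support ∧ y ∈ w.support ∧ G.Adj x y ∧
      s(x, y) ∉ w.edges ∧ F = {s(x, y)}) ∨
  (∃ D : Set V, D.Nonempty ∧ (∀ x ∈ D, x ∉ w.support) ∧ (G.induce D).Connected ∧
      (∀ x ∈ D, ∀ y : V, G.Adj x y → y ∈ D ∨ y ∈ w.support) ∧
      F = {e | e ∈ G.edgeSet ∧ ∃ x ∈ D, x ∈ e})

/-- The vertices of attachment of a bridge with edge set `F`. -/
def attachments {a : V} (G : SimpleGraph V) (w : G.Walk a a) (F : Set (Sym2 V)) : Set V :=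
  {x | x ∈ w.support ∧ ∃ e ∈ F, x ∈ e}

/-- A path through a bridge: a path between two distinct vertices of attachment
all of whose edges lie in the bridge. -/
def IsPathThrough {a : V} (G : SimpleGraph V) (w : G.Walk a a) (F : Set (Sym2 V))
    {x y : V} (Q : G.Walk x y) : Prop :=
  x ≠ y ∧ x ∈ attachments G w F ∧ y ∈ attachments G w F ∧ Q.IsPath ∧
    ∀ e ∈ Q.edges, e ∈ F

/-- `G` is a block: it is connected and has no cutpoint. -/
def IsBlock (G : SimpleGraph V) : Prop :=
  G.Connected ∧ ∀ v : V, ((⊤ : G.Subgraph).deleteVerts {v}).coe.Connected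

set_option linter.unusedSectionVars false
set_option maxHeartbeats 1000000

section NBAuxSec
variable {G : SimpleGraph V}

namespace NBAux

lemma mem_supp {x : V} {u v : V} {R : G.Walk u v} {f : Sym2 V}
    (hf : f ∈ R.edges) (hx : x ∈ f) : x ∈ R.support := by
  induction f with
  | _ y z =>
    rw [Sym2.mem_iff] at hx
    rcases hx with rfl | rfl
    · exact R.fst_mem_support_of_mem_edges hf
    · exact R.snd_mem_support_of_mem_edges hf

lemma not_mem_tail_of_nodup {x y : V} {R : G.Walk x y} (h : R.support.Nodup) :
    x ∉ R.support.tail := by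
  rw [R.support_eq_cons] at h
  exact (List.nodup_cons.mp h).1

lemma edge_at_start_unique {x y : V} (R : G.Walk x y) (hx : x ∉ R.support.tail) :
    ∀ f ∈ R.edges, x ∈ f → ∀ g ∈ R.edges, x ∈ g → f = g := by
  cases R with
  | nil => intro f hf; simp at hf
  | cons h R' =>
    intro f hf hxf g hg hxg
    simp only [Walk.support_cons, List.tail_cons] at hx
    simp only [Walk.edges_cons, List.mem_cons] at hf hg
    rcases hf with rfl | hf
    · rcases hg with rfl | hg
      · rfl
      · exact absurd (mem_supp hg hxg) hx
    · exact absurd (mem_supp hf hxf) hx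

lemma edge_at_start_exists {x y : V} (R : G.Walk x y) (h : ¬R.Nil) :
    ∃ f ∈ R.edges, x ∈ f := by
  cases R with
  | nil => simp at h
  | cons h' R' => exact ⟨_, List.mem_cons_self, Sym2.mem_mk_left _ _⟩

/-- In a cycle starting at `x`, there are exactly two edges containing `x`. -/
lemma cycle_start_two {x : V} {q : G.Walk x x} (hq : q.IsCycle) :
    ∃ g₁ g₂, g₁ ∈ q.edges ∧ g₂ ∈ q.edges ∧ g₁ ≠ g₂ ∧ x ∈ g₁ ∧ x ∈ g₂ ∧
      ∀ g ∈ q.edges, x ∈ g → g = g₁ ∨ g = g₂ := by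
  cases q with
  | nil => exact absurd rfl hq.ne_nil
  | @cons _ x' _ h q' =>
    have hlen := hq.three_le_length
    have hq'nil : ¬ q'.Nil := by
      rw [Walk.nil_iff_length_eq]
      simp only [Walk.length_cons] at hlen
      omega
    have hq'rnil : ¬ q'.reverse.Nil := by
      rw [Walk.nil_iff_length_eq, Walk.length_reverse]
      rw [Walk.nil_iff_length_eq] at hq'nil
      exact hq'nil
    have hq'supp : q'.support.Nodup := by
      have := hq.support_nodup
      simpa using this
    have hrevnodup : q'.reverse.support.Nodup := by
      rw [Walk.support_reverse]; exact List.nodup_reverse.2 hq'supp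
    obtain ⟨g₂, hg₂r, hxg₂⟩ := edge_at_start_exists q'.reverse hq'rnil
    have hg₂ : g₂ ∈ q'.edges := by
      rw [Walk.edges_reverse, List.mem_reverse] at hg₂r
      exact hg₂r
    have hnd : (Walk.cons h q').edges.Nodup := hq.isTrail.edges_nodup
    simp only [Walk.edges_cons, List.nodup_cons] at hnd
    refine ⟨s(x, x'), g₂, List.mem_cons_self, List.mem_cons_of_mem _ hg₂,
      fun hEq => hnd.1 (hEq ▸ hg₂), Sym2.mem_mk_left _ _, hxg₂, ?_⟩
    intro g hg hxg
    simp only [Walk.edges_cons, List.mem_cons] at hg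
    rcases hg with rfl | hg
    · exact Or.inl rfl
    · right
      have hgr : g ∈ q'.reverse.edges := by
        rw [Walk.edges_reverse, List.mem_reverse]; exact hg
      exact edge_at_start_unique q'.reverse (not_mem_tail_of_nodup hrevnodup) g hgr hxg g₂ hg₂r hxg₂

lemma cycle_second_edge {v x : V} {w' : G.Walk v v} (hw : w'.IsCycle) {f : Sym2 V}
    (hf : f ∈ w'.edges) (hx : x ∈ f) : ∃ g ∈ w'.edges, g ≠ f ∧ x ∈ g := by
  have hxs : x ∈ w'.support := mem_supp hf hx
  have hq : (w'.rotate x hxs).IsCycle := hw.rotate hxs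
  have hperm : ∀ g : Sym2 V, g ∈ (w'.rotate x hxs).edges ↔ g ∈ w'.edges :=
    fun g => (w'.rotate_edges x hxs).mem_iff
  obtain ⟨g₁, g₂, m1, m2, hne, h1, h2, -⟩ := cycle_start_two hq
  by_cases hg : g₁ = f
  · exact ⟨g₂, (hperm _).1 m2, fun hEq => hne (hg ▸ hEq).symm, h2⟩
  · exact ⟨g₁, (hperm _).1 m1, hg, h1⟩

lemma cycle_not_three {v x : V} {w' : G.Walk v v} (hw : w'.IsCycle) {f₁ f₂ f₃ : Sym2 V}
    (h₁ : f₁ ∈ w'.edges) (h₂ : f₂ ∈ w'.edges) (h₃ : f₃ ∈ w'.edges)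
    (h₁₂ : f₁ ≠ f₂) (h₁₃ : f₁ ≠ f₃) (h₂₃ : f₂ ≠ f₃)
    (hx₁ : x ∈ f₁) (hx₂ : x ∈ f₂) (hx₃ : x ∈ f₃) : False := by
  have hxs : x ∈ w'.support := mem_supp h₁ hx₁
  have hq : (w'.rotate x hxs).IsCycle := hw.rotate hxs
  have hperm : ∀ g : Sym2 V, g ∈ (w'.rotate x hxs).edges ↔ g ∈ w'.edges :=
    fun g => (w'.rotate_edges x hxs).mem_iff
  obtain ⟨g₁, g₂, -, -, -, -, -, huniq⟩ := cycle_start_two hq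
  rcases huniq f₁ ((hperm _).2 h₁) hx₁ with e1 | e1 <;>
  rcases huniq f₂ ((hperm _).2 h₂) hx₂ with e2 | e2 <;>
  rcases huniq f₃ ((hperm _).2 h₃) hx₃ with e3 | e3 <;>
  first
  | exact h₁₂ (e1.trans e2.symm)
  | exact h₁₃ (e1.trans e3.symm)
  | exact h₂₃ (e2.trans e3.symm)

/-- All-or-nothing propagation along a segment whose interior vertices have all
their incident edges inside the segment. -/
lemma prop_seg (s : Finset (Sym2 V))
    (hL2 : ∀ f ∈ s, ∀ x' : V, x' ∈ f → ∃ g ∈ s, g ≠ f ∧ x' ∈ g) :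
    ∀ {x y : V} (Q : G.Walk x y), Q.support.Nodup →
      (∀ z ∈ Q.support, z ≠ x → z ≠ y → ∀ f ∈ s, z ∈ f → f ∈ Q.edges) →
      (∃ f ∈ Q.edges, f ∈ s) → ∀ f ∈ Q.edges, f ∈ s := by
  intro x y Q
  induction Q with
  | nil => intro _ _ _ f hf; simp at hf
  | @cons x x' y h Q' ih =>
    intro hQ hint hne
    simp only [Walk.support_cons, List.nodup_cons] at hQ
    have hxQ' : x ∉ Q'.support := hQ.1
    have hQ' : Q'.support.Nodup := hQ.2
    obtain ⟨f₀, hf₀Q, hf₀s⟩ := hne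
    cases Q' with
    | nil =>
      intro f hf
      simp only [Walk.edges_cons, Walk.edges_nil, List.mem_cons] at hf hf₀Q
      simp only [List.not_mem_nil, or_false] at hf hf₀Q
      rwa [hf, ← hf₀Q]
    | @cons x' x'' y h' Q'' =>
      -- x' is an interior vertex of the whole walk
      have hx'x : x' ≠ x := fun hEq => hxQ' (hEq ▸ Walk.start_mem_support _)
      have hx'y : x' ≠ y := by
        intro hEq
        subst hEq
        rw [Walk.support_cons, List.nodup_cons] at hQ'
        exact hQ'.1 (Walk.end_mem_support _)
      have hintQ' : ∀ z ∈ (Walk.cons h' Q'').support, z ≠ x' → z ≠ y →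
          ∀ f ∈ s, z ∈ f → f ∈ (Walk.cons h' Q'').edges := by
        intro z hz hzx' hzy f hfs hzf
        have hzx : z ≠ x := fun hEq => hxQ' (hEq ▸ hz)
        have hzQ : z ∈ (Walk.cons h (Walk.cons h' Q'')).support := by
          simp only [Walk.support_cons, List.mem_cons]; right; simpa using hz
        have := hint z hzQ hzx hzy f hfs hzf
        simp only [Walk.edges_cons, List.mem_cons] at this ⊢
        rcases this with rfl | hmem
        · rw [Sym2.mem_iff] at hzf
          rcases hzf with rfl | rfl
          · exact absurd rfl hzx
          · exact absurd rfl hzx'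
        · exact hmem
      have hfirst : s(x', x'') ∈ (Walk.cons h' Q'').edges := by simp
      -- main case split on where f₀ is
      rw [Walk.edges_cons, List.mem_cons] at hf₀Q
      have main : s(x, x') ∈ s ∧ ∀ f ∈ (Walk.cons h' Q'').edges, f ∈ s := by
        rcases hf₀Q with rfl | hf₀Q
        · -- f₀ = s(x,x')
          obtain ⟨g, hgs, hgne, hx'g⟩ := hL2 _ hf₀s x' (Sym2.mem_mk_right _ _)
          have hgQ : g ∈ (Walk.cons h' Q'').edges := by
            have hx'supp : x' ∈ (Walk.cons h (Walk.cons h' Q'')).support := by simp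
            have := hint x' hx'supp hx'x hx'y g hgs hx'g
            simp only [Walk.edges_cons, List.mem_cons] at this
            rcases this with rfl | hmem
            · exact absurd rfl hgne
            · simpa using hmem
          have hall := ih hQ' hintQ' ⟨g, hgQ, hgs⟩
          exact ⟨hf₀s, hall⟩
        · -- f₀ in the tail
          have hall := ih hQ' hintQ' ⟨f₀, hf₀Q, hf₀s⟩
          have hfes : s(x', x'') ∈ s := hall _ hfirst
          obtain ⟨g, hgs, hgne, hx'g⟩ := hL2 _ hfes x' (Sym2.mem_mk_left _ _)
          have hx'supp : x' ∈ (Walk.cons h (Walk.cons h' Q'')).support := by simp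
          have := hint x' hx'supp hx'x hx'y g hgs hx'g
          simp only [Walk.edges_cons, List.mem_cons] at this
          rcases this with rfl | this
          · exact ⟨hgs, hall⟩
          · rcases this with rfl | this
            · exact absurd rfl hgne
            · exfalso
              have : x' ∈ Q''.support := mem_supp this hx'g
              exact (List.nodup_cons.mp (by simpa using hQ')).1 this
      intro f hf
      simp only [Walk.edges_cons, List.mem_cons] at hf
      rcases hf with rfl | hf
      · exact main.1
      · exact main.2 f (by simpa using hf)

end NBAux

end NBAuxSec

theorem not_battery_on_non_handle_segment {V : Type*} [DecidableEq V]
    (G : SimpleGraph V) (σ : Sym2 V → ℤˣ) {a b c d : V}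
    (hab : a ≠ b) (hac : a ≠ c) (had : a ≠ d) (hbc : b ≠ c) (hbd : b ≠ d) (hcd : c ≠ d)
    (P₁ : G.Walk a b) (P₂ : G.Walk b c) (P₃ : G.Walk c d) (P₄ : G.Walk d a)
    (hC : (P₁.append (P₂.append (P₃.append P₄))).IsCycle)
    -- the two chords, joining the endpoints of the segments `P₁` and `P₃`:
    (hc₁ : G.Adj a b) (hc₂ : G.Adj c d)
    (hch₁ : s(a, b) ∉ (P₁.append (P₂.append (P₃.append P₄))).edges)
    (hch₂ : s(c, d) ∉ (P₁.append (P₂.append (P₃.append P₄))).edges)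
    -- the underlying graph is exactly the circle together with the two chords:
    (hedges : ∀ f : Sym2 V, f ∈ G.edgeSet ↔
      f ∈ (P₁.append (P₂.append (P₃.append P₄))).edges ∨ f = s(a, b) ∨ f = s(c, d))
    -- `e` lies on the segment of the circle between the two chords:
    (e : Sym2 V) (he : e ∈ P₂.edges) :
    ¬ (∃! s : Finset (Sym2 V), IsCircleOf G s ∧ e ∈ s ∧ esign σ s = -1) ∧
    ¬ (∃! s : Finset (Sym2 V), IsCircleOf G s ∧ e ∈ s ∧ esign σ s = 1) := by
  set w := P₁.append (P₂.append (P₃.append P₄)) with hwdef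
  have hwedges : w.edges = P₁.edges ++ (P₂.edges ++ (P₃.edges ++ P₄.edges)) := by
    simp [hwdef, Walk.edges_append]
  have hndtail : (P₁.support.tail ++ (P₂.support.tail ++ (P₃.support.tail ++ P₄.support.tail))).Nodup := by
    have := hC.support_nodup
    simpa [hwdef, Walk.tail_support_append] using this
  have hedgesnd : (P₁.edges ++ (P₂.edges ++ (P₃.edges ++ P₄.edges))).Nodup := by
    have := hC.isTrail.edges_nodup
    rwa [hwedges] at this
  -- tail nodups and disjointness
  rw [List.nodup_append] at hndtail
  obtain ⟨n₁, hrest, dj₁⟩ := hndtail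
  rw [List.nodup_append] at hrest
  obtain ⟨n₂, hrest2, dj₂⟩ := hrest
  rw [List.nodup_append] at hrest2
  obtain ⟨n₃, n₄, dj₃⟩ := hrest2
  have d₁₂ : ∀ z, z ∈ P₁.support.tail → z ∈ P₂.support.tail → False := by
    intro z h1 h2; exact dj₁ z h1 z (by simp [h2]) rfl
  have d₁₃ : ∀ z, z ∈ P₁.support.tail → z ∈ P₃.support.tail → False := by
    intro z h1 h2; exact dj₁ z h1 z (by simp [h2]) rfl
  have d₁₄ : ∀ z, z ∈ P₁.support.tail → z ∈ P₄.support.tail → False := by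
    intro z h1 h2; exact dj₁ z h1 z (by simp [h2]) rfl
  have d₂₃ : ∀ z, z ∈ P₂.support.tail → z ∈ P₃.support.tail → False := by
    intro z h1 h2; exact dj₂ z h1 z (by simp [h2]) rfl
  have d₂₄ : ∀ z, z ∈ P₂.support.tail → z ∈ P₄.support.tail → False := by
    intro z h1 h2; exact dj₂ z h1 z (by simp [h2]) rfl
  have d₃₄ : ∀ z, z ∈ P₃.support.tail → z ∈ P₄.support.tail → False := fun z h1 h2 => dj₃ z h1 z h2 rfl
  -- edge list nodups and disjointness
  rw [List.nodup_append] at hedgesnd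
  obtain ⟨en₁, herest, edj₁⟩ := hedgesnd
  rw [List.nodup_append] at herest
  obtain ⟨en₂, herest2, edj₂⟩ := herest
  rw [List.nodup_append] at herest2
  obtain ⟨en₃, en₄, edj₃⟩ := herest2
  have ed₁₂ : ∀ f, f ∈ P₁.edges → f ∈ P₂.edges → False := by
    intro f h1 h2; exact edj₁ f h1 f (by simp [h2]) rfl
  have ed₂₃ : ∀ f, f ∈ P₂.edges → f ∈ P₃.edges → False := by
    intro f h1 h2; exact edj₂ f h1 f (by simp [h2]) rfl
  have ed₂₄ : ∀ f, f ∈ P₂.edges → f ∈ P₄.edges → False := by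
    intro f h1 h2; exact edj₂ f h1 f (by simp [h2]) rfl
  have ed₁₃ : ∀ f, f ∈ P₁.edges → f ∈ P₃.edges → False := by
    intro f h1 h2; exact edj₁ f h1 f (by simp [h2]) rfl
  have ed₁₄ : ∀ f, f ∈ P₁.edges → f ∈ P₄.edges → False := by
    intro f h1 h2; exact edj₁ f h1 f (by simp [h2]) rfl
  have ed₃₄ : ∀ f, f ∈ P₃.edges → f ∈ P₄.edges → False := fun f h1 h2 => edj₃ f h1 f h2 rfl
  -- chords are not on the circle
  have habP : ∀ {f}, f ∈ P₁.edges ∨ f ∈ P₂.edges ∨ f ∈ P₃.edges ∨ f ∈ P₄.edges → f ≠ s(a,b) := by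
    intro f hf hEq
    apply hch₁
    rw [hwedges, ← hEq]
    simp only [List.mem_append]
    tauto
  have hcdP : ∀ {f}, f ∈ P₁.edges ∨ f ∈ P₂.edges ∨ f ∈ P₃.edges ∨ f ∈ P₄.edges → f ≠ s(c,d) := by
    intro f hf hEq
    apply hch₂
    rw [hwedges, ← hEq]
    simp only [List.mem_append]
    tauto
  have habcd : s(a,b) ≠ s(c,d) := by
    rw [Ne, Sym2.eq_iff]
    push_neg
    exact ⟨fun h => absurd h hac, fun h => absurd h had⟩
  -- endpoints in tails
  have hb1 : b ∈ P₁.support.tail := by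
    have := P₁.end_mem_support
    rw [P₁.support_eq_cons] at this
    rcases List.mem_cons.mp this with h | h
    · exact absurd h.symm hab
    · exact h
  have hc2 : c ∈ P₂.support.tail := by
    have := P₂.end_mem_support
    rw [P₂.support_eq_cons] at this
    rcases List.mem_cons.mp this with h | h
    · exact absurd h.symm hbc
    · exact h
  have hd3 : d ∈ P₃.support.tail := by
    have := P₃.end_mem_support
    rw [P₃.support_eq_cons] at this
    rcases List.mem_cons.mp this with h | h
    · exact absurd h.symm hcd
    · exact h
  have ha4 : a ∈ P₄.support.tail := by
    have := P₄.end_mem_support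
    rw [P₄.support_eq_cons] at this
    rcases List.mem_cons.mp this with h | h
    · exact absurd h had
    · exact h
  have ha1 : a ∉ P₁.support.tail := fun h => d₁₄ a h ha4
  have ha2 : a ∉ P₂.support.tail := fun h => d₂₄ a h ha4
  have ha3 : a ∉ P₃.support.tail := fun h => d₃₄ a h ha4
  have hb2 : b ∉ P₂.support.tail := fun h => d₁₂ b hb1 h
  have hb3 : b ∉ P₃.support.tail := fun h => d₁₃ b hb1 h
  have hb4 : b ∉ P₄.support.tail := fun h => d₁₄ b hb1 h
  have hc1 : c ∉ P₁.support.tail := fun h => d₁₂ c h hc2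
  have hc3 : c ∉ P₃.support.tail := fun h => d₂₃ c hc2 h
  have hc4 : c ∉ P₄.support.tail := fun h => d₂₄ c hc2 h
  have hd1 : d ∉ P₁.support.tail := fun h => d₁₃ d h hd3
  have hd2 : d ∉ P₂.support.tail := fun h => d₂₃ d h hd3
  have hd4 : d ∉ P₄.support.tail := fun h => d₃₄ d hd3 h
  -- path nodups
  have hP₁nd : P₁.support.Nodup := by
    rw [P₁.support_eq_cons]; exact List.nodup_cons.mpr ⟨ha1, n₁⟩
  have hP₂nd : P₂.support.Nodup := by
    rw [P₂.support_eq_cons]; exact List.nodup_cons.mpr ⟨hb2, n₂⟩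
  have hP₃nd : P₃.support.Nodup := by
    rw [P₃.support_eq_cons]; exact List.nodup_cons.mpr ⟨hc3, n₃⟩
  have hP₄nd : P₄.support.Nodup := by
    rw [P₄.support_eq_cons]; exact List.nodup_cons.mpr ⟨hd4, n₄⟩
  -- support membership characterization
  have hsupp₁ : ∀ z, z ∈ P₁.support → z = a ∨ z ∈ P₁.support.tail := by
    intro z hz; rw [P₁.support_eq_cons] at hz; exact List.mem_cons.mp hz
  have hsupp₂ : ∀ z, z ∈ P₂.support → z = b ∨ z ∈ P₂.support.tail := by
    intro z hz; rw [P₂.support_eq_cons] at hz; exact List.mem_cons.mp hz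
  have hsupp₃ : ∀ z, z ∈ P₃.support → z = c ∨ z ∈ P₃.support.tail := by
    intro z hz; rw [P₃.support_eq_cons] at hz; exact List.mem_cons.mp hz
  have hsupp₄ : ∀ z, z ∈ P₄.support → z = d ∨ z ∈ P₄.support.tail := by
    intro z hz; rw [P₄.support_eq_cons] at hz; exact List.mem_cons.mp hz
  -- nonnil
  have hn₁ : ¬P₁.Nil := Walk.not_nil_of_ne hab
  have hn₂ : ¬P₂.Nil := Walk.not_nil_of_ne hbc
  have hn₃ : ¬P₃.Nil := Walk.not_nil_of_ne hcd
  have hn₄ : ¬P₄.Nil := Walk.not_nil_of_ne (Ne.symm had)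
  -- case analysis for edges of G
  have hcases : ∀ g ∈ G.edgeSet, g ∈ P₁.edges ∨ g ∈ P₂.edges ∨ g ∈ P₃.edges ∨ g ∈ P₄.edges ∨
      g = s(a,b) ∨ g = s(c,d) := by
    intro g hg
    rcases (hedges g).1 hg with hgw | h | h
    · rw [hwedges] at hgw
      simp only [List.mem_append] at hgw
      tauto
    · tauto
    · tauto
  -- interior vertices of each segment see only that segment's edges
  have hint₁ : ∀ z ∈ P₁.support, z ≠ a → z ≠ b → ∀ f ∈ G.edgeSet, z ∈ f → f ∈ P₁.edges := by
    intro z hz hza hzb f hfG hzf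
    have hzt : z ∈ P₁.support.tail := (hsupp₁ z hz).resolve_left hza
    have hzc : z ≠ c := fun h => hc1 (h ▸ hzt)
    have hzd : z ≠ d := fun h => hd1 (h ▸ hzt)
    rcases hcases f hfG with h|h|h|h|rfl|rfl
    · exact h
    · exact absurd ((hsupp₂ z (NBAux.mem_supp h hzf)).resolve_left hzb) (fun h' => d₁₂ z hzt h')
    · exact absurd ((hsupp₃ z (NBAux.mem_supp h hzf)).resolve_left hzc) (fun h' => d₁₃ z hzt h')
    · exact absurd ((hsupp₄ z (NBAux.mem_supp h hzf)).resolve_left hzd) (fun h' => d₁₄ z hzt h')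
    · rw [Sym2.mem_iff] at hzf; rcases hzf with h|h; exacts [absurd h hza, absurd h hzb]
    · rw [Sym2.mem_iff] at hzf; rcases hzf with h|h; exacts [absurd h hzc, absurd h hzd]
  have hint₂ : ∀ z ∈ P₂.support, z ≠ b → z ≠ c → ∀ f ∈ G.edgeSet, z ∈ f → f ∈ P₂.edges := by
    intro z hz hzb hzc f hfG hzf
    have hzt : z ∈ P₂.support.tail := (hsupp₂ z hz).resolve_left hzb
    have hza : z ≠ a := fun h => ha2 (h ▸ hzt)
    have hzd : z ≠ d := fun h => hd2 (h ▸ hzt)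
    rcases hcases f hfG with h|h|h|h|rfl|rfl
    · exact absurd ((hsupp₁ z (NBAux.mem_supp h hzf)).resolve_left hza) (fun h' => d₁₂ z h' hzt)
    · exact h
    · exact absurd ((hsupp₃ z (NBAux.mem_supp h hzf)).resolve_left hzc) (fun h' => d₂₃ z hzt h')
    · exact absurd ((hsupp₄ z (NBAux.mem_supp h hzf)).resolve_left hzd) (fun h' => d₂₄ z hzt h')
    · rw [Sym2.mem_iff] at hzf; rcases hzf with h|h; exacts [absurd h hza, absurd h hzb]
    · rw [Sym2.mem_iff] at hzf; rcases hzf with h|h; exacts [absurd h hzc, absurd h hzd]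
  have hint₃ : ∀ z ∈ P₃.support, z ≠ c → z ≠ d → ∀ f ∈ G.edgeSet, z ∈ f → f ∈ P₃.edges := by
    intro z hz hzc hzd f hfG hzf
    have hzt : z ∈ P₃.support.tail := (hsupp₃ z hz).resolve_left hzc
    have hza : z ≠ a := fun h => ha3 (h ▸ hzt)
    have hzb : z ≠ b := fun h => hb3 (h ▸ hzt)
    rcases hcases f hfG with h|h|h|h|rfl|rfl
    · exact absurd ((hsupp₁ z (NBAux.mem_supp h hzf)).resolve_left hza) (fun h' => d₁₃ z h' hzt)
    · exact absurd ((hsupp₂ z (NBAux.mem_supp h hzf)).resolve_left hzb) (fun h' => d₂₃ z h' hzt)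
    · exact h
    · exact absurd ((hsupp₄ z (NBAux.mem_supp h hzf)).resolve_left hzd) (fun h' => d₃₄ z hzt h')
    · rw [Sym2.mem_iff] at hzf; rcases hzf with h|h; exacts [absurd h hza, absurd h hzb]
    · rw [Sym2.mem_iff] at hzf; rcases hzf with h|h; exacts [absurd h hzc, absurd h hzd]
  have hint₄ : ∀ z ∈ P₄.support, z ≠ d → z ≠ a → ∀ f ∈ G.edgeSet, z ∈ f → f ∈ P₄.edges := by
    intro z hz hzd hza f hfG hzf
    have hzt : z ∈ P₄.support.tail := (hsupp₄ z hz).resolve_left hzd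
    have hzb : z ≠ b := fun h => hb4 (h ▸ hzt)
    have hzc : z ≠ c := fun h => hc4 (h ▸ hzt)
    rcases hcases f hfG with h|h|h|h|rfl|rfl
    · exact absurd ((hsupp₁ z (NBAux.mem_supp h hzf)).resolve_left hza) (fun h' => d₁₄ z h' hzt)
    · exact absurd ((hsupp₂ z (NBAux.mem_supp h hzf)).resolve_left hzb) (fun h' => d₂₄ z h' hzt)
    · exact absurd ((hsupp₃ z (NBAux.mem_supp h hzf)).resolve_left hzc) (fun h' => d₃₄ z h' hzt)
    · exact h
    · rw [Sym2.mem_iff] at hzf; rcases hzf with h|h; exacts [absurd h hza, absurd h hzb]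
    · rw [Sym2.mem_iff] at hzf; rcases hzf with h|h; exacts [absurd h hzc, absurd h hzd]
  -- the four candidate circles
  set S₁ : Finset (Sym2 V) := (P₁.edges ++ (P₂.edges ++ (P₃.edges ++ P₄.edges))).toFinset with hS₁
  set S₂ : Finset (Sym2 V) := (s(a,b) :: (P₂.edges ++ (P₃.edges ++ P₄.edges))).toFinset with hS₂
  set S₃ : Finset (Sym2 V) := (P₁.edges ++ (P₂.edges ++ (s(c,d) :: P₄.edges))).toFinset with hS₃
  set S₄ : Finset (Sym2 V) := (s(a,b) :: (P₂.edges ++ (s(c,d) :: P₄.edges))).toFinset with hS₄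
  have hm₁ : ∀ f, f ∈ S₁ ↔ f ∈ P₁.edges ∨ f ∈ P₂.edges ∨ f ∈ P₃.edges ∨ f ∈ P₄.edges := by
    intro f; rw [hS₁]; simp
  have hm₂ : ∀ f, f ∈ S₂ ↔ f = s(a,b) ∨ f ∈ P₂.edges ∨ f ∈ P₃.edges ∨ f ∈ P₄.edges := by
    intro f; rw [hS₂]; simp
  have hm₃ : ∀ f, f ∈ S₃ ↔ f ∈ P₁.edges ∨ f ∈ P₂.edges ∨ f = s(c,d) ∨ f ∈ P₄.edges := by
    intro f; rw [hS₃]; simp; tauto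
  have hm₄ : ∀ f, f ∈ S₄ ↔ f = s(a,b) ∨ f ∈ P₂.edges ∨ f = s(c,d) ∨ f ∈ P₄.edges := by
    intro f; rw [hS₄]; simp; tauto
  -- nodup of the four edge lists
  have ndcd₄ : (s(c,d) :: P₄.edges).Nodup :=
    List.nodup_cons.mpr ⟨fun h => hcdP (Or.inr (Or.inr (Or.inr h))) rfl, en₄⟩
  have ndL₂tail : (P₂.edges ++ (P₃.edges ++ P₄.edges)).Nodup :=
    List.nodup_append.mpr ⟨en₂, List.nodup_append.mpr ⟨en₃, en₄, edj₃⟩, edj₂⟩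
  have ndL₁ : (P₁.edges ++ (P₂.edges ++ (P₃.edges ++ P₄.edges))).Nodup :=
    List.nodup_append.mpr ⟨en₁, ndL₂tail, edj₁⟩
  have ndL₂ : (s(a,b) :: (P₂.edges ++ (P₃.edges ++ P₄.edges))).Nodup := by
    refine List.nodup_cons.mpr ⟨?_, ndL₂tail⟩
    intro h
    rcases List.mem_append.mp h with h|h
    · exact habP (Or.inr (Or.inl h)) rfl
    · rcases List.mem_append.mp h with h|h
      · exact habP (Or.inr (Or.inr (Or.inl h))) rfl
      · exact habP (Or.inr (Or.inr (Or.inr h))) rfl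
  have ndL₃tail : (P₂.edges ++ (s(c,d) :: P₄.edges)).Nodup := by
    refine List.nodup_append.mpr ⟨en₂, ndcd₄, ?_⟩
    intro f h1 f' h2 hff; subst hff
    rcases List.mem_cons.mp h2 with h|h
    · exact hcdP (Or.inr (Or.inl h1)) h
    · exact ed₂₄ f h1 h
  have ndL₃ : (P₁.edges ++ (P₂.edges ++ (s(c,d) :: P₄.edges))).Nodup := by
    refine List.nodup_append.mpr ⟨en₁, ndL₃tail, ?_⟩
    intro f h1 f' h2 hff; subst hff
    rcases List.mem_append.mp h2 with h|h
    · exact ed₁₂ f h1 h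
    · rcases List.mem_cons.mp h with h|h
      · exact hcdP (Or.inl h1) h
      · exact ed₁₄ f h1 h
  have ndL₄ : (s(a,b) :: (P₂.edges ++ (s(c,d) :: P₄.edges))).Nodup := by
    refine List.nodup_cons.mpr ⟨?_, ndL₃tail⟩
    intro h
    rcases List.mem_append.mp h with h|h
    · exact habP (Or.inr (Or.inl h)) rfl
    · rcases List.mem_cons.mp h with h|h
      · exact habcd h
      · exact habP (Or.inr (Or.inr (Or.inr h))) rfl
  -- the four circles
  have circ₁ : IsCircleOf G S₁ := ⟨a, w, hC, by rw [hwedges, hS₁]⟩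
  have hpath₂₃₄ : (P₂.append (P₃.append P₄)).IsPath := by
    rw [Walk.isPath_def, Walk.support_append, Walk.tail_support_append, P₂.support_eq_cons,
      List.cons_append, List.nodup_cons]
    refine ⟨?_, List.nodup_append.mpr ⟨n₂, List.nodup_append.mpr ⟨n₃, n₄, dj₃⟩, dj₂⟩⟩
    simp only [List.mem_append]
    rintro (h | h | h)
    exacts [hb2 h, hb3 h, hb4 h]
  have hcyc₂ : (Walk.cons hc₁ (P₂.append (P₃.append P₄))).IsCycle := by
    rw [Walk.cons_isCycle_iff]
    refine ⟨hpath₂₃₄, ?_⟩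
    rw [Walk.edges_append, Walk.edges_append]
    intro h
    rcases List.mem_append.mp h with h|h
    · exact habP (Or.inr (Or.inl h)) rfl
    · rcases List.mem_append.mp h with h|h
      · exact habP (Or.inr (Or.inr (Or.inl h))) rfl
      · exact habP (Or.inr (Or.inr (Or.inr h))) rfl
  have circ₂ : IsCircleOf G S₂ :=
    ⟨a, Walk.cons hc₁ (P₂.append (P₃.append P₄)), hcyc₂, by
      rw [hS₂]; simp [Walk.edges_append]⟩
  have hW₃edges : (P₁.append (P₂.append (Walk.cons hc₂ P₄))).edges
      = P₁.edges ++ (P₂.edges ++ (s(c,d) :: P₄.edges)) := by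
    simp [Walk.edges_append]
  have hcyc₃ : (P₁.append (P₂.append (Walk.cons hc₂ P₄))).IsCycle := by
    rw [Walk.isCycle_def, Walk.isTrail_def, hW₃edges]
    refine ⟨ndL₃, ?_, ?_⟩
    · have hmem : s(c,d) ∈ (P₁.append (P₂.append (Walk.cons hc₂ P₄))).edges := by
        rw [hW₃edges]; simp
      intro h
      rw [h] at hmem
      simp at hmem
    · rw [Walk.tail_support_append, Walk.tail_support_append, Walk.support_cons,
        List.tail_cons, P₄.support_eq_cons]
      refine List.nodup_append.mpr ⟨n₁, List.nodup_append.mpr ⟨n₂,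
        List.nodup_cons.mpr ⟨hd4, n₄⟩, ?_⟩, ?_⟩
      · intro z h1 z' h2 hzz; subst hzz
        rcases List.mem_cons.mp h2 with rfl|h
        · exact hd2 h1
        · exact d₂₄ z h1 h
      · intro z h1 z' h2 hzz; subst hzz
        rcases List.mem_append.mp h2 with h|h
        · exact d₁₂ z h1 h
        · rcases List.mem_cons.mp h with rfl|h
          · exact hd1 h1
          · exact d₁₄ z h1 h
  have circ₃ : IsCircleOf G S₃ :=
    ⟨a, P₁.append (P₂.append (Walk.cons hc₂ P₄)), hcyc₃, by
      rw [hW₃edges, hS₃]⟩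
  have hpath₂cd₄ : (P₂.append (Walk.cons hc₂ P₄)).IsPath := by
    rw [Walk.isPath_def, Walk.support_append, Walk.support_cons, List.tail_cons,
      P₄.support_eq_cons, P₂.support_eq_cons, List.cons_append, List.nodup_cons]
    constructor
    · intro h
      rcases List.mem_append.mp h with h|h
      · exact hb2 h
      · rcases List.mem_cons.mp h with h|h
        · exact hbd h
        · exact hb4 h
    · refine List.nodup_append.mpr ⟨n₂, List.nodup_cons.mpr ⟨hd4, n₄⟩, ?_⟩
      intro z h1 z' h2 hzz; subst hzz
      rcases List.mem_cons.mp h2 with rfl|h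
      · exact hd2 h1
      · exact d₂₄ z h1 h
  have hcyc₄ : (Walk.cons hc₁ (P₂.append (Walk.cons hc₂ P₄))).IsCycle := by
    rw [Walk.cons_isCycle_iff]
    refine ⟨hpath₂cd₄, ?_⟩
    rw [Walk.edges_append, Walk.edges_cons]
    intro h
    rcases List.mem_append.mp h with h|h
    · exact habP (Or.inr (Or.inl h)) rfl
    · rcases List.mem_cons.mp h with h|h
      · exact habcd h
      · exact habP (Or.inr (Or.inr (Or.inr h))) rfl
  have circ₄ : IsCircleOf G S₄ :=
    ⟨a, Walk.cons hc₁ (P₂.append (Walk.cons hc₂ P₄)), hcyc₄, by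
      rw [hS₄]; simp [Walk.edges_append]⟩
  -- signs of the four circles
  have hsign₁ : esign σ S₁ = (P₁.edges.map σ).prod *
      ((P₂.edges.map σ).prod * ((P₃.edges.map σ).prod * (P₄.edges.map σ).prod)) := by
    rw [hS₁]
    show _ = _
    rw [esign, List.prod_toFinset σ ndL₁]
    simp
  have hsign₂ : esign σ S₂ = σ s(a,b) *
      ((P₂.edges.map σ).prod * ((P₃.edges.map σ).prod * (P₄.edges.map σ).prod)) := by
    rw [hS₂, esign, List.prod_toFinset σ ndL₂]
    simp
  have hsign₃ : esign σ S₃ = (P₁.edges.map σ).prod *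
      ((P₂.edges.map σ).prod * (σ s(c,d) * (P₄.edges.map σ).prod)) := by
    rw [hS₃, esign, List.prod_toFinset σ ndL₃]
    simp
  have hsign₄ : esign σ S₄ = σ s(a,b) *
      ((P₂.edges.map σ).prod * (σ s(c,d) * (P₄.edges.map σ).prod)) := by
    rw [hS₄, esign, List.prod_toFinset σ ndL₄]
    simp
  -- chord membership in the four circles
  have habS₁ : s(a,b) ∉ S₁ := fun h => habP ((hm₁ _).1 h) rfl
  have habS₂ : s(a,b) ∈ S₂ := (hm₂ _).2 (Or.inl rfl)
  have habS₃ : s(a,b) ∉ S₃ := by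
    intro h
    rcases (hm₃ _).1 h with h|h|h|h
    · exact habP (Or.inl h) rfl
    · exact habP (Or.inr (Or.inl h)) rfl
    · exact habcd h
    · exact habP (Or.inr (Or.inr (Or.inr h))) rfl
  have habS₄ : s(a,b) ∈ S₄ := (hm₄ _).2 (Or.inl rfl)
  have hcdS₁ : s(c,d) ∉ S₁ := fun h => hcdP ((hm₁ _).1 h) rfl
  have hcdS₂ : s(c,d) ∉ S₂ := by
    intro h
    rcases (hm₂ _).1 h with h|h|h|h
    · exact habcd h.symm
    · exact hcdP (Or.inr (Or.inl h)) rfl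
    · exact hcdP (Or.inr (Or.inr (Or.inl h))) rfl
    · exact hcdP (Or.inr (Or.inr (Or.inr h))) rfl
  have hcdS₃ : s(c,d) ∈ S₃ := (hm₃ _).2 (Or.inr (Or.inr (Or.inl rfl)))
  have hcdS₄ : s(c,d) ∈ S₄ := (hm₄ _).2 (Or.inr (Or.inr (Or.inl rfl)))
  have heS₁ : e ∈ S₁ := (hm₁ _).2 (Or.inr (Or.inl he))
  have heS₂ : e ∈ S₂ := (hm₂ _).2 (Or.inr (Or.inl he))
  have heS₃ : e ∈ S₃ := (hm₃ _).2 (Or.inr (Or.inl he))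
  have heS₄ : e ∈ S₄ := (hm₄ _).2 (Or.inr (Or.inl he))
  -- classification: every circle through `e` is one of the four
  have analyze : ∀ s : Finset (Sym2 V), IsCircleOf G s → e ∈ s →
      s = S₁ ∨ s = S₂ ∨ s = S₃ ∨ s = S₄ := by
    rintro s ⟨v, w', hw', hws⟩ hes
    have hmem : ∀ f : Sym2 V, f ∈ s ↔ f ∈ w'.edges := by
      intro f; rw [← hws, List.mem_toFinset]
    have hsubs : ∀ f ∈ s, f ∈ G.edgeSet := fun f hf => w'.edges_subset_edgeSet ((hmem f).1 hf)
    have hL2s : ∀ f ∈ s, ∀ x : V, x ∈ f → ∃ g ∈ s, g ≠ f ∧ x ∈ g := by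
      intro f hf x hx
      obtain ⟨g, hg, hgne, hxg⟩ := NBAux.cycle_second_edge hw' ((hmem f).1 hf) hx
      exact ⟨g, (hmem g).2 hg, hgne, hxg⟩
    have hL1s : ∀ (x : V) (f₁ f₂ f₃ : Sym2 V), f₁ ∈ s → f₂ ∈ s → f₃ ∈ s →
        f₁ ≠ f₂ → f₁ ≠ f₃ → f₂ ≠ f₃ → x ∈ f₁ → x ∈ f₂ → x ∈ f₃ → False :=
      fun x f₁ f₂ f₃ m₁ m₂ m₃ =>
        NBAux.cycle_not_three hw' ((hmem _).1 m₁) ((hmem _).1 m₂) ((hmem _).1 m₃)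
    have hint₁s : ∀ z ∈ P₁.support, z ≠ a → z ≠ b → ∀ f ∈ s, z ∈ f → f ∈ P₁.edges :=
      fun z hz h1 h2 f hf => hint₁ z hz h1 h2 f (hsubs f hf)
    have hint₂s : ∀ z ∈ P₂.support, z ≠ b → z ≠ c → ∀ f ∈ s, z ∈ f → f ∈ P₂.edges :=
      fun z hz h1 h2 f hf => hint₂ z hz h1 h2 f (hsubs f hf)
    have hint₃s : ∀ z ∈ P₃.support, z ≠ c → z ≠ d → ∀ f ∈ s, z ∈ f → f ∈ P₃.edges :=
      fun z hz h1 h2 f hf => hint₃ z hz h1 h2 f (hsubs f hf)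
    have hint₄s : ∀ z ∈ P₄.support, z ≠ d → z ≠ a → ∀ f ∈ s, z ∈ f → f ∈ P₄.edges :=
      fun z hz h1 h2 f hf => hint₄ z hz h1 h2 f (hsubs f hf)
    have hP₂s : ∀ f ∈ P₂.edges, f ∈ s := NBAux.prop_seg s hL2s P₂ hP₂nd hint₂s ⟨e, he, hes⟩
    obtain ⟨f₂, hf₂P, hbf₂⟩ := NBAux.edge_at_start_exists P₂ hn₂
    have hf₂s : f₂ ∈ s := hP₂s _ hf₂P
    have hbuniq : ∀ g ∈ P₂.edges, b ∈ g → g = f₂ := fun g hg hbg =>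
      NBAux.edge_at_start_unique P₂ (NBAux.not_mem_tail_of_nodup hP₂nd) g hg hbg f₂ hf₂P hbf₂
    have hP₂rnd : P₂.reverse.support.Nodup := by
      rw [Walk.support_reverse]; exact List.nodup_reverse.2 hP₂nd
    obtain ⟨f₂', hf₂'r, hcf₂'⟩ :=
      NBAux.edge_at_start_exists P₂.reverse (Walk.not_nil_of_ne (Ne.symm hbc))
    have hf₂'P : f₂' ∈ P₂.edges := by rwa [Walk.edges_reverse, List.mem_reverse] at hf₂'r
    have hf₂'s : f₂' ∈ s := hP₂s _ hf₂'P
    have hcuniq : ∀ g ∈ P₂.edges, c ∈ g → g = f₂' := by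
      intro g hg hcg
      have hgr : g ∈ P₂.reverse.edges := by rwa [Walk.edges_reverse, List.mem_reverse]
      exact NBAux.edge_at_start_unique P₂.reverse (NBAux.not_mem_tail_of_nodup hP₂rnd)
        g hgr hcg f₂' hf₂'r hcf₂'
    have hP₁rnd : P₁.reverse.support.Nodup := by
      rw [Walk.support_reverse]; exact List.nodup_reverse.2 hP₁nd
    obtain ⟨f₁b, hf₁br, hbf₁b⟩ :=
      NBAux.edge_at_start_exists P₁.reverse (Walk.not_nil_of_ne (Ne.symm hab))
    have hf₁bP : f₁b ∈ P₁.edges := by rwa [Walk.edges_reverse, List.mem_reverse] at hf₁br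
    obtain ⟨f₃c, hf₃cP, hcf₃c⟩ := NBAux.edge_at_start_exists P₃ hn₃
    have hthree_b : s(a,b) ∈ s → (∀ f ∈ P₁.edges, f ∈ s) → False := by
      intro h1 h2
      exact hL1s b f₁b f₂ s(a,b) (h2 _ hf₁bP) hf₂s h1
        (fun h => ed₁₂ _ hf₁bP (by rw [h]; exact hf₂P))
        (habP (Or.inl hf₁bP))
        (habP (Or.inr (Or.inl hf₂P)))
        hbf₁b hbf₂ (Sym2.mem_mk_right a b)
    have hthree_c : s(c,d) ∈ s → (∀ f ∈ P₃.edges, f ∈ s) → False := by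
      intro h1 h2
      exact hL1s c f₃c f₂' s(c,d) (h2 _ hf₃cP) hf₂'s h1
        (fun h => ed₂₃ f₂' hf₂'P (by rw [← h]; exact hf₃cP))
        (hcdP (Or.inr (Or.inr (Or.inl hf₃cP))))
        (hcdP (Or.inr (Or.inl hf₂'P)))
        hcf₃c hcf₂' (Sym2.mem_mk_left c d)
    have hbranch₁ : ((∀ f ∈ P₁.edges, f ∈ s) ∧ s(a,b) ∉ s) ∨
        (s(a,b) ∈ s ∧ ∀ f ∈ P₁.edges, f ∉ s) := by
      obtain ⟨g, hgs, hgne, hbg⟩ := hL2s f₂ hf₂s b hbf₂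
      rcases hcases g (hsubs g hgs) with h|h|h|h|rfl|rfl
      · left
        have hP₁all : ∀ f ∈ P₁.edges, f ∈ s := NBAux.prop_seg s hL2s P₁ hP₁nd hint₁s ⟨g, h, hgs⟩
        exact ⟨hP₁all, fun habs => hthree_b habs hP₁all⟩
      · exact absurd (hbuniq g h hbg) hgne
      · exact absurd ((hsupp₃ b (NBAux.mem_supp h hbg)).resolve_left hbc) hb3
      · exact absurd ((hsupp₄ b (NBAux.mem_supp h hbg)).resolve_left hbd) hb4
      · right
        exact ⟨hgs, fun f hf hfs =>
          hthree_b hgs (NBAux.prop_seg s hL2s P₁ hP₁nd hint₁s ⟨f, hf, hfs⟩)⟩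
      · exfalso; rw [Sym2.mem_iff] at hbg; rcases hbg with h|h; exacts [hbc h, hbd h]
    have hbranch₂ : ((∀ f ∈ P₃.edges, f ∈ s) ∧ s(c,d) ∉ s) ∨
        (s(c,d) ∈ s ∧ ∀ f ∈ P₃.edges, f ∉ s) := by
      obtain ⟨g, hgs, hgne, hcg⟩ := hL2s f₂' hf₂'s c hcf₂'
      rcases hcases g (hsubs g hgs) with h|h|h|h|rfl|rfl
      · exact absurd ((hsupp₁ c (NBAux.mem_supp h hcg)).resolve_left (fun h' => hac h'.symm)) hc1
      · exact absurd (hcuniq g h hcg) hgne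
      · left
        have hP₃all : ∀ f ∈ P₃.edges, f ∈ s := NBAux.prop_seg s hL2s P₃ hP₃nd hint₃s ⟨g, h, hgs⟩
        exact ⟨hP₃all, fun hcds => hthree_c hcds hP₃all⟩
      · exact absurd ((hsupp₄ c (NBAux.mem_supp h hcg)).resolve_left hcd) hc4
      · exfalso; rw [Sym2.mem_iff] at hcg
        rcases hcg with h|h; exacts [hac h.symm, hbc h.symm]
      · right
        exact ⟨hgs, fun f hf hfs =>
          hthree_c hgs (NBAux.prop_seg s hL2s P₃ hP₃nd hint₃s ⟨f, hf, hfs⟩)⟩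
    have hP₄s : ∀ f ∈ P₄.edges, f ∈ s := by
      obtain ⟨f₁a, hf₁aP, haf₁a⟩ := NBAux.edge_at_start_exists P₁ hn₁
      have hauniq : ∀ g ∈ P₁.edges, a ∈ g → g = f₁a := fun g hg hag =>
        NBAux.edge_at_start_unique P₁ (NBAux.not_mem_tail_of_nodup hP₁nd) g hg hag f₁a hf₁aP haf₁a
      rcases hbranch₁ with ⟨hP₁all, habnot⟩ | ⟨habin, hP₁not⟩
      · obtain ⟨g, hgs, hgne, hag⟩ := hL2s f₁a (hP₁all _ hf₁aP) a haf₁a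
        rcases hcases g (hsubs g hgs) with h|h|h|h|rfl|rfl
        · exact absurd (hauniq g h hag) hgne
        · exact absurd ((hsupp₂ a (NBAux.mem_supp h hag)).resolve_left hab) ha2
        · exact absurd ((hsupp₃ a (NBAux.mem_supp h hag)).resolve_left hac) ha3
        · exact NBAux.prop_seg s hL2s P₄ hP₄nd hint₄s ⟨g, h, hgs⟩
        · exact absurd hgs habnot
        · exfalso; rw [Sym2.mem_iff] at hag; rcases hag with h|h; exacts [hac h, had h]
      · obtain ⟨g, hgs, hgne, hag⟩ := hL2s s(a,b) habin a (Sym2.mem_mk_left a b)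
        rcases hcases g (hsubs g hgs) with h|h|h|h|rfl|rfl
        · exact absurd hgs (hP₁not g h)
        · exact absurd ((hsupp₂ a (NBAux.mem_supp h hag)).resolve_left hab) ha2
        · exact absurd ((hsupp₃ a (NBAux.mem_supp h hag)).resolve_left hac) ha3
        · exact NBAux.prop_seg s hL2s P₄ hP₄nd hint₄s ⟨g, h, hgs⟩
        · exact absurd rfl hgne
        · exfalso; rw [Sym2.mem_iff] at hag; rcases hag with h|h; exacts [hac h, had h]
    rcases hbranch₁ with ⟨hP₁all, habnot⟩ | ⟨habin, hP₁not⟩ <;>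
      rcases hbranch₂ with ⟨hP₃all, hcdnot⟩ | ⟨hcdin, hP₃not⟩
    · left
      apply Finset.ext; intro f
      rw [hm₁ f]
      constructor
      · intro hf
        rcases hcases f (hsubs f hf) with h|h|h|h|rfl|rfl
        exacts [Or.inl h, Or.inr (Or.inl h), Or.inr (Or.inr (Or.inl h)),
          Or.inr (Or.inr (Or.inr h)), absurd hf habnot, absurd hf hcdnot]
      · rintro (h|h|h|h); exacts [hP₁all _ h, hP₂s _ h, hP₃all _ h, hP₄s _ h]
    · right; right; left
      apply Finset.ext; intro f
      rw [hm₃ f]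
      constructor
      · intro hf
        rcases hcases f (hsubs f hf) with h|h|h|h|rfl|rfl
        exacts [Or.inl h, Or.inr (Or.inl h), absurd hf (hP₃not f h),
          Or.inr (Or.inr (Or.inr h)), absurd hf habnot, Or.inr (Or.inr (Or.inl rfl))]
      · rintro (h|h|h|h)
        exacts [hP₁all _ h, hP₂s _ h, h ▸ hcdin, hP₄s _ h]
    · right; left
      apply Finset.ext; intro f
      rw [hm₂ f]
      constructor
      · intro hf
        rcases hcases f (hsubs f hf) with h|h|h|h|rfl|rfl
        exacts [absurd hf (hP₁not f h), Or.inr (Or.inl h), Or.inr (Or.inr (Or.inl h)),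
          Or.inr (Or.inr (Or.inr h)), Or.inl rfl, absurd hf hcdnot]
      · rintro (h|h|h|h)
        exacts [h ▸ habin, hP₂s _ h, hP₃all _ h, hP₄s _ h]
    · right; right; right
      apply Finset.ext; intro f
      rw [hm₄ f]
      constructor
      · intro hf
        rcases hcases f (hsubs f hf) with h|h|h|h|rfl|rfl
        exacts [absurd hf (hP₁not f h), Or.inr (Or.inl h), absurd hf (hP₃not f h),
          Or.inr (Or.inr (Or.inr h)), Or.inl rfl, Or.inr (Or.inr (Or.inl rfl))]
      · rintro (h|h|h|h)
        exacts [h ▸ habin, hP₂s _ h, h ▸ hcdin, hP₄s _ h]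
  -- endgame: units arithmetic
  set q₁ := (P₁.edges.map σ).prod with hq₁def
  set α : ℤˣ := σ s(a,b) with hαdef
  set u := ((P₂.edges.map σ).prod * ((P₃.edges.map σ).prod * (P₄.edges.map σ).prod)) with hudef
  set vv := ((P₂.edges.map σ).prod * (σ s(c,d) * (P₄.edges.map σ).prod)) with hvdef
  have hx2 : ∀ x y : ℤˣ, x = y ∨ x = -y := by
    intro x y
    rcases Int.units_eq_one_or x with rfl|rfl <;> rcases Int.units_eq_one_or y with rfl|rfl <;> simp
  have key : ∀ ε : ℤˣ, ¬ ∃! s : Finset (Sym2 V), IsCircleOf G s ∧ e ∈ s ∧ esign σ s = ε := by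
    intro ε h
    obtain ⟨s, ⟨hcirc, hes, hsg⟩, huniq⟩ := h
    rcases hx2 q₁ α with h1 | h1
    · rcases analyze s hcirc hes with rfl|rfl|rfl|rfl
      · have hEq : S₂ = S₁ := huniq S₂ ⟨circ₂, heS₂, by rw [hsign₂, ← h1, ← hsign₁]; exact hsg⟩
        exact habS₁ (hEq ▸ habS₂)
      · have hEq : S₁ = S₂ := huniq S₁ ⟨circ₁, heS₁, by rw [hsign₁, h1, ← hsign₂]; exact hsg⟩
        exact habS₁ (by rw [hEq]; exact habS₂)
      · have hEq : S₄ = S₃ := huniq S₄ ⟨circ₄, heS₄, by rw [hsign₄, ← h1, ← hsign₃]; exact hsg⟩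
        exact habS₃ (hEq ▸ habS₄)
      · have hEq : S₃ = S₄ := huniq S₃ ⟨circ₃, heS₃, by rw [hsign₃, h1, ← hsign₄]; exact hsg⟩
        exact habS₃ (by rw [hEq]; exact habS₄)
    · rcases hx2 u vv with h2 | h2
      · rcases analyze s hcirc hes with rfl|rfl|rfl|rfl
        · have hEq : S₃ = S₁ := huniq S₃ ⟨circ₃, heS₃, by rw [hsign₃, ← h2, ← hsign₁]; exact hsg⟩
          exact hcdS₁ (hEq ▸ hcdS₃)
        · have hEq : S₄ = S₂ := huniq S₄ ⟨circ₄, heS₄, by rw [hsign₄, ← h2, ← hsign₂]; exact hsg⟩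
          exact hcdS₂ (hEq ▸ hcdS₄)
        · have hEq : S₁ = S₃ := huniq S₁ ⟨circ₁, heS₁, by rw [hsign₁, h2, ← hsign₃]; exact hsg⟩
          exact hcdS₁ (by rw [hEq]; exact hcdS₃)
        · have hEq : S₂ = S₄ := huniq S₂ ⟨circ₂, heS₂, by rw [hsign₂, h2, ← hsign₄]; exact hsg⟩
          exact hcdS₂ (by rw [hEq]; exact hcdS₄)
      · have hkey14 : esign σ S₁ = esign σ S₄ := by
          rw [hsign₁, hsign₄, h1, h2, neg_mul_neg]
        have hkey23 : esign σ S₂ = esign σ S₃ := by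
          rw [hsign₂, hsign₃, h1, h2, mul_neg, neg_mul]
        rcases analyze s hcirc hes with rfl|rfl|rfl|rfl
        · have hEq : S₄ = S₁ := huniq S₄ ⟨circ₄, heS₄, by rw [← hkey14]; exact hsg⟩
          exact habS₁ (hEq ▸ habS₄)
        · have hEq : S₃ = S₂ := huniq S₃ ⟨circ₃, heS₃, by rw [← hkey23]; exact hsg⟩
          exact habS₃ (by rw [hEq]; exact habS₂)
        · have hEq : S₂ = S₃ := huniq S₂ ⟨circ₂, heS₂, by rw [hkey23]; exact hsg⟩
          exact habS₃ (hEq ▸ habS₂)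
        · have hEq : S₁ = S₄ := huniq S₁ ⟨circ₁, heS₁, by rw [hkey14]; exact hsg⟩
          exact habS₁ (by rw [hEq]; exact habS₄)
  exact ⟨key (-1), key 1⟩
end

section
/- If an edge e of a signed graph Σ lies in a unique positive circle C, then every bridge of C is balanced (contains no negative circle). -/
open SimpleGraph Finset

variable {V : Type*} [DecidableEq V]

set_option linter.unusedSectionVars false

namespace BPB

set_option linter.unusedSectionVars false

variable {G : SimpleGraph V} {u v x y z : V} {σ : Sym2 V → ℤˣ}

lemma unit_sq (a : ℤˣ) : a * a = 1 := by
  rcases Int.units_eq_one_or a with h | h <;> simp [h]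

lemma wsign_append (p : G.Walk u v) (q : G.Walk v x) :
    wsign σ (p.append q) = wsign σ p * wsign σ q := by
  simp [wsign, Walk.edges_append]

lemma wsign_reverse (p : G.Walk u v) : wsign σ p.reverse = wsign σ p := by
  simp [wsign, Walk.edges_reverse, List.prod_reverse]

lemma wsign_rotate (c : G.Walk v v) (h : u ∈ c.support) :
    wsign σ (c.rotate u h) = wsign σ c :=
  List.Perm.prod_eq (((c.rotate_edges u h).perm).map σ)

lemma esign_eq_wsign {p : G.Walk u v} (h : p.IsTrail) :
    esign σ p.edges.toFinset = wsign σ p :=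
  List.prod_toFinset σ h.edges_nodup

lemma support_append_subset_left (p1 : G.Walk u z) (p2 : G.Walk z v) :
    p1.support ⊆ (p1.append p2).support := fun _ hx =>
  (Walk.mem_support_append_iff _ _).mpr (Or.inl hx)

lemma support_append_subset_right (p1 : G.Walk u z) (p2 : G.Walk z v) :
    p2.support ⊆ (p1.append p2).support := fun _ hx =>
  (Walk.mem_support_append_iff _ _).mpr (Or.inr hx)

lemma exists_firstTouch {u v : V} (W : G.Walk u v) (X : Set V)
    (hx : ∃ z ∈ W.support, z ∈ X) :
    ∃ (z : V) (W1 : G.Walk u z) (W2 : G.Walk z v), W1.append W2 = W ∧ z ∈ X ∧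
      ∀ y ∈ W1.support, y ∈ X → y = z := by
  induction W with
  | nil =>
    obtain ⟨z, hz, hzX⟩ := hx
    simp only [Walk.support_nil, List.mem_singleton] at hz
    subst hz
    exact ⟨z, Walk.nil, Walk.nil, rfl, hzX, by simp⟩
  | @cons a b c h W ih =>
    by_cases ha : a ∈ X
    · exact ⟨a, Walk.nil, Walk.cons h W, rfl, ha, by simp⟩
    · have hx' : ∃ z ∈ W.support, z ∈ X := by
        obtain ⟨z, hz, hzX⟩ := hx
        rw [Walk.support_cons, List.mem_cons] at hz
        rcases hz with rfl | hz
        · exact absurd hzX ha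
        · exact ⟨z, hz, hzX⟩
      obtain ⟨z, W1, W2, happ, hzX, hfirst⟩ := ih hx'
      refine ⟨z, Walk.cons h W1, W2, by rw [Walk.cons_append, happ], hzX, ?_⟩
      intro y hy hyX
      rw [Walk.support_cons, List.mem_cons] at hy
      rcases hy with rfl | hy
      · exact absurd hyX ha
      · exact hfirst y hy hyX

lemma mem_support_of_mem_edge {p : G.Walk u v} {f : Sym2 V} {x : V}
    (hf : f ∈ p.edges) (hx : x ∈ f) : x ∈ p.support := by
  revert hf hx
  induction f using Sym2.ind with
  | _ a b =>
    intro hf hx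
    rw [Sym2.mem_iff] at hx
    rcases hx with rfl | rfl
    · exact p.fst_mem_support_of_mem_edges hf
    · exact p.snd_mem_support_of_mem_edges hf

lemma exists_incident_edge {p : G.Walk u v} {x : V} (hx : x ∈ p.support) (hnil : ¬p.Nil) :
    ∃ f ∈ p.edges, x ∈ f := by
  induction p with
  | nil => simp at hnil
  | @cons a b c h q ih =>
    rw [Walk.support_cons, List.mem_cons] at hx
    rcases hx with rfl | hx'
    · exact ⟨s(x, b), by simp, by simp⟩
    · cases q with
      | nil =>
        simp only [Walk.support_nil, List.mem_singleton] at hx'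
        subst hx'
        exact ⟨s(a, x), by simp, by simp⟩
      | cons h' r =>
        obtain ⟨f, hf, hxf⟩ := ih hx' (by simp)
        exact ⟨f, by rw [Walk.edges_cons]; exact List.mem_cons_of_mem _ hf, hxf⟩

lemma isPath_append {a b c : V} {p : G.Walk a b} {q : G.Walk b c} (hp : p.IsPath) (hq : q.IsPath)
    (hint : ∀ v ∈ p.support, v ∈ q.support → v = b) : (p.append q).IsPath := by
  rw [Walk.isPath_def, Walk.support_append]
  have hq' := hq.support_nodup
  rw [q.support_eq_cons] at hq'
  rw [List.nodup_cons] at hq'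
  refine List.Nodup.append hp.support_nodup hq'.2 ?_
  intro v hv hv'
  have hvq : v ∈ q.support := by rw [q.support_eq_cons]; exact List.mem_cons_of_mem _ hv'
  have := hint v hv hvq
  subst this
  exact hq'.1 hv'

lemma loop_path_eq_nil {p : G.Walk u u} (hp : p.IsPath) : p = Walk.nil := by
  cases p with
  | nil => rfl
  | cons h q =>
    exact absurd q.end_mem_support ((Walk.cons_isPath_iff _ _).mp hp).2

lemma edges_of_length_one {p : G.Walk u v} (h : p.length = 1) : p.edges = [s(u, v)] := by
  cases p with
  | nil => simp at h
  | cons h' q =>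
    cases q with
    | nil => simp
    | cons h'' r => simp [Walk.length_cons] at h

lemma not_nil_of_ne {p : G.Walk u v} (h : u ≠ v) : ¬p.Nil := by
  cases p with
  | nil => exact absurd rfl h
  | cons h' q => simp

lemma length_pos_of_ne {p : G.Walk u v} (h : u ≠ v) : 1 ≤ p.length := by
  cases p with
  | nil => exact absurd rfl h
  | cons h' q => simp [Walk.length_cons]

lemma length_eq_one_of_mem_edge {T : G.Walk x y} (hT : T.IsPath)
    (h : s(x, y) ∈ T.edges) : T.length = 1 := by
  cases T with
  | nil => simp at h
  | @cons a b c h' q =>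
    rw [Walk.edges_cons, List.mem_cons] at h
    rcases h with h | h
    · rw [Sym2.eq_iff] at h
      rcases h with ⟨-, rfl⟩ | ⟨h1, h2⟩
      · have hq : q.IsPath := ((Walk.cons_isPath_iff _ _).mp hT).1
        rw [loop_path_eq_nil hq]
        simp
      · exact absurd h1 h'.ne
    · exact absurd (mem_support_of_mem_edge h (Sym2.mem_mk_left _ _))
        ((Walk.cons_isPath_iff _ _).mp hT).2
lemma isCycle_append {T : G.Walk x y} {S : G.Walk y x} (hxy : x ≠ y)
    (hT : T.IsPath) (hS : S.IsPath)
    (hint : ∀ v ∈ T.support, v ∈ S.support → v = x ∨ v = y)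
    (hlen : 2 ≤ T.length ∨ 2 ≤ S.length) : (T.append S).IsCycle := by
  have hdisj : ∀ ⦃f⦄, f ∈ T.edges → f ∈ S.edges → False := by
    intro f hfT hfS
    revert hfT hfS
    induction f using Sym2.ind with
    | _ p1 p2 =>
      intro hfT hfS
      have hne : p1 ≠ p2 := (T.adj_of_mem_edges hfT).ne
      have hp1 : p1 = x ∨ p1 = y :=
        hint p1 (mem_support_of_mem_edge hfT (Sym2.mem_mk_left _ _))
          (mem_support_of_mem_edge hfS (Sym2.mem_mk_left _ _))
      have hp2 : p2 = x ∨ p2 = y :=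
        hint p2 (mem_support_of_mem_edge hfT (Sym2.mem_mk_right _ _))
          (mem_support_of_mem_edge hfS (Sym2.mem_mk_right _ _))
      have hfxy : s(p1, p2) = s(x, y) := by
        rcases hp1 with rfl | rfl <;> rcases hp2 with rfl | rfl
        · exact absurd rfl hne
        · rfl
        · exact Sym2.eq_swap
        · exact absurd rfl hne
      rw [hfxy] at hfT hfS
      have h1 : T.length = 1 := length_eq_one_of_mem_edge hT hfT
      have h2 : S.length = 1 :=
        length_eq_one_of_mem_edge hS (by rw [Sym2.eq_swap] at hfS; exact hfS)
      rcases hlen with h | h <;> omega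
  rw [Walk.isCycle_def]
  refine ⟨⟨?_⟩, ?_, ?_⟩
  · rw [Walk.edges_append]
    exact List.Nodup.append hT.isTrail.edges_nodup hS.isTrail.edges_nodup hdisj
  · intro hMnil
    have hl := congrArg Walk.length hMnil
    rw [Walk.length_append, Walk.length_nil] at hl
    have := length_pos_of_ne (p := T) hxy
    omega
  · rw [Walk.tail_support_append]
    have hTt : T.support.tail.Nodup := by
      have := hT.support_nodup; rw [T.support_eq_cons] at this; exact (List.nodup_cons.mp this).2
    have hSt : S.support.tail.Nodup := by
      have := hS.support_nodup; rw [S.support_eq_cons] at this; exact (List.nodup_cons.mp this).2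
    refine List.Nodup.append hTt hSt ?_
    intro v hvT hvS
    have hvT' : v ∈ T.support := by rw [T.support_eq_cons]; exact List.mem_cons_of_mem _ hvT
    have hvS' : v ∈ S.support := by rw [S.support_eq_cons]; exact List.mem_cons_of_mem _ hvS
    rcases hint v hvT' hvS' with rfl | rfl
    · have := hT.support_nodup; rw [T.support_eq_cons] at this
      exact (List.nodup_cons.mp this).1 hvT
    · have := hS.support_nodup; rw [S.support_eq_cons] at this
      exact (List.nodup_cons.mp this).1 hvS

lemma cycle_split {c : G.Walk x x} (hc : c.IsCycle) (hy : y ∈ c.support) (hyx : y ≠ x) :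
    (c.takeUntil y hy).IsPath ∧ (c.dropUntil y hy).IsPath := by
  have htail : c.support.tail
      = (c.takeUntil y hy).support.tail ++ (c.dropUntil y hy).support.tail := by
    conv_lhs => rw [← c.take_spec hy]
    rw [Walk.tail_support_append]
  have hnd := hc.support_nodup
  rw [htail, List.nodup_append] at hnd
  obtain ⟨h1, h2, hdisj⟩ := hnd
  have hyT : y ∈ (c.takeUntil y hy).support.tail := by
    have h := (c.takeUntil y hy).end_mem_support
    rw [(c.takeUntil y hy).support_eq_cons, List.mem_cons] at h
    rcases h with h | h
    · exact absurd h hyx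
    · exact h
  have hxD : x ∈ (c.dropUntil y hy).support.tail := by
    have h := (c.dropUntil y hy).end_mem_support
    rw [(c.dropUntil y hy).support_eq_cons, List.mem_cons] at h
    rcases h with h | h
    · exact absurd h.symm hyx
    · exact h
  constructor
  · rw [Walk.isPath_def, (c.takeUntil y hy).support_eq_cons, List.nodup_cons]
    exact ⟨fun hxT => hdisj _ hxT _ hxD rfl, h1⟩
  · rw [Walk.isPath_def, (c.dropUntil y hy).support_eq_cons, List.nodup_cons]
    exact ⟨fun hyD => hdisj _ hyT _ hyD rfl, h2⟩

lemma path_append_inter {p1 : G.Walk u z} {p2 : G.Walk z v} {p : G.Walk u v}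
    (hp : p.IsPath) (happ : p1.append p2 = p) :
    p1.IsPath ∧ p2.IsPath ∧ ∀ x, x ∈ p1.support → x ∈ p2.support → x = z := by
  subst happ
  refine ⟨Walk.IsPath.of_append_left hp, Walk.IsPath.of_append_right hp, ?_⟩
  have hnd := hp.support_nodup
  rw [Walk.support_append, List.nodup_append] at hnd
  intro x hx1 hx2
  rw [p2.support_eq_cons, List.mem_cons] at hx2
  rcases hx2 with rfl | hx2
  · rfl
  · exact (hnd.2.2 _ hx1 _ hx2 rfl).elim

lemma mem_support_rotate {c : G.Walk v v} (h : u ∈ c.support) {x : V} :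
    x ∈ (c.rotate u h).support ↔ x ∈ c.support := by
  constructor
  · intro hx
    simp only [Walk.rotate] at hx
    rw [Walk.mem_support_append_iff] at hx
    rcases hx with hx | hx
    · exact c.support_dropUntil_subset h hx
    · exact c.support_takeUntil_subset h hx
  · intro hx
    simp only [Walk.rotate]
    rw [Walk.mem_support_append_iff]
    rw [← c.take_spec h, Walk.mem_support_append_iff] at hx
    tauto

lemma mem_edges_rotate {c : G.Walk v v} (h : u ∈ c.support) {f : Sym2 V} :
    f ∈ (c.rotate u h).edges ↔ f ∈ c.edges :=
  (c.rotate_edges u h).perm.mem_iff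

lemma eq_cons_of_mem_edge_head {b a : V} {Q : G.Walk b a} (hQ : Q.IsPath) {f : Sym2 V}
    (hf : f ∈ Q.edges) (hb : b ∈ f) :
    ∃ (v2 : V) (h : G.Adj b v2) (Q' : G.Walk v2 a), Q = Walk.cons h Q' ∧ f = s(b, v2) := by
  cases Q with
  | nil => simp at hf
  | @cons _ w1 _ h' Q' =>
    rw [Walk.edges_cons, List.mem_cons] at hf
    rcases hf with heq | hf
    · exact ⟨w1, h', Q', rfl, heq⟩
    · exact absurd (mem_support_of_mem_edge hf hb) ((Walk.cons_isPath_iff _ _).mp hQ).2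

lemma cycle_edge_decomp {a : V} {w : G.Walk a a} (hw : w.IsCycle) {e : Sym2 V}
    (he : e ∈ w.edges) :
    ∃ (c1 c2 : V) (_h12 : G.Adj c1 c2) (Pw : G.Walk c2 c1), Pw.IsPath ∧ e = s(c1, c2) ∧
      (∀ v, v ∈ w.support ↔ v ∈ Pw.support) := by
  revert he
  induction e using Sym2.ind with
  | _ x1 x2 =>
    intro he
    have hx1 : x1 ∈ w.support := w.fst_mem_support_of_mem_edges he
    have hwr : (w.rotate x1 hx1).IsCycle := hw.rotate hx1
    have hewr : s(x1, x2) ∈ (w.rotate x1 hx1).edges := (mem_edges_rotate hx1).mpr he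
    have hsupp : ∀ v, v ∈ (w.rotate x1 hx1).support ↔ v ∈ w.support :=
      fun v => mem_support_rotate hx1
    revert hwr hewr hsupp
    generalize w.rotate x1 hx1 = wr
    intro hwr hewr hsupp
    cases wr with
    | nil => exact absurd hwr Walk.IsCycle.not_of_nil
    | @cons _ b _ h0 q =>
      have hq : q.IsPath := by
        rw [Walk.isPath_def]
        have := hwr.support_nodup
        rwa [Walk.support_cons, List.tail_cons] at this
      rw [Walk.edges_cons, List.mem_cons] at hewr
      rcases hewr with heq | hmem
      · have hx2b : x2 = b := Sym2.congr_right.mp heq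
        subst hx2b
        refine ⟨x1, x2, h0, q, hq, rfl, ?_⟩
        intro v
        rw [← hsupp v, Walk.support_cons, List.mem_cons]
        constructor
        · rintro (rfl | hv)
          · exact q.end_mem_support
          · exact hv
        · exact Or.inr
      · have hrev : s(x1, x2) ∈ q.reverse.edges := by
          rw [Walk.edges_reverse, List.mem_reverse]; exact hmem
        obtain ⟨u2, h', Q'', heqq, hf⟩ :=
          eq_cons_of_mem_edge_head hq.reverse hrev (Sym2.mem_mk_left _ _)
        have hx2u : x2 = u2 := Sym2.congr_right.mp hf
        subst hx2u
        have hQ : Q''.IsPath ∧ x1 ∉ Q''.support := by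
          have hh := hq.reverse
          rw [heqq, Walk.cons_isPath_iff] at hh
          exact hh
        have hcons : (Walk.cons h0.symm (Walk.nil : G.Walk x1 x1)).IsPath := by
          rw [Walk.cons_isPath_iff]
          exact ⟨by simp [Walk.isPath_def], by simp [Ne.symm h0.ne]⟩
        refine ⟨x1, x2, h', Q''.append (Walk.cons h0.symm Walk.nil), ?_, rfl, ?_⟩
        · refine isPath_append hQ.1 hcons ?_
          intro v hv hv'
          rw [Walk.support_cons, List.mem_cons] at hv'
          rcases hv' with rfl | hv'
          · rfl
          · simp only [Walk.support_nil, List.mem_singleton] at hv'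
            subst hv'
            exact absurd hv hQ.2
        · intro v
          rw [← hsupp v, Walk.support_cons, List.mem_cons, Walk.mem_support_append_iff]
          have hqsup : v ∈ q.support ↔ v = x1 ∨ v ∈ Q''.support := by
            rw [← List.mem_reverse, ← Walk.support_reverse, heqq, Walk.support_cons,
              List.mem_cons]
          rw [hqsup]
          simp only [Walk.support_cons, Walk.support_nil]
          constructor
          · rintro (rfl | (rfl | hv))
            · right; simp
            · right; simp
            · exact Or.inl hv
          · rintro (hv | hv)
            · exact Or.inr (Or.inr hv)
            · simp only [List.mem_cons] at hv
              rcases hv with rfl | hv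
              · exact Or.inr (Or.inr Q''.end_mem_support)
              · rcases hv with rfl | hv
                · exact Or.inl rfl
                · simp at hv
lemma path_loop_support {p : G.Walk u v} (hp : p.IsPath) (h : u = v) :
    ∀ x ∈ p.support, x = u := by
  subst h
  rw [loop_path_eq_nil hp]
  intro x hx
  simpa using hx

lemma exists_arc {a : V} {w : G.Walk a a} (hw : w.IsCycle) {e : Sym2 V}
    (he : e ∈ w.edges) (H : Set V) (hH : ∀ v ∈ H, v ∈ w.support)
    {p q : V} (hp : p ∈ H) (hq : q ∈ H) (hpq : p ≠ q) :
    ∃ (x y : V) (S : G.Walk y x), x ∈ H ∧ y ∈ H ∧ x ≠ y ∧ S.IsPath ∧ e ∈ S.edges ∧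
      (∀ v ∈ S.support, v ∈ w.support) ∧ (∀ v ∈ S.support, v ∈ H → v = x ∨ v = y) := by
  obtain ⟨c1, c2, h12, Pw, hPw, rfl, hiff⟩ := cycle_edge_decomp hw he
  obtain ⟨x, P1, P2, happ1, hxH, hP1⟩ := exists_firstTouch Pw H ⟨p, (hiff p).mp (hH p hp), hp⟩
  obtain ⟨hP1p, hP2p, hinter12⟩ := path_append_inter hPw happ1
  have hq0 : ∃ q0, q0 ∈ H ∧ q0 ≠ x := by
    by_cases hpx : p = x
    · exact ⟨q, hq, by rw [← hpx]; exact hpq.symm⟩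
    · exact ⟨p, hp, hpx⟩
  obtain ⟨q0, hq0H, hq0x⟩ := hq0
  have hq0P2 : q0 ∈ P2.support := by
    have hh : q0 ∈ Pw.support := (hiff q0).mp (hH q0 hq0H)
    rw [← happ1, Walk.mem_support_append_iff] at hh
    rcases hh with h | h
    · exact absurd (hP1 q0 h hq0H) hq0x
    · exact h
  obtain ⟨y, Q1, Q2, happ2, hyH, hQ1⟩ :=
    exists_firstTouch P2.reverse {v | v ∈ H ∧ v ≠ x}
      ⟨q0, by rw [Walk.support_reverse, List.mem_reverse]; exact hq0P2, hq0H, hq0x⟩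
  obtain ⟨hQ1p, hQ2p, hinterQ⟩ := path_append_inter hP2p.reverse happ2
  have hyx : y ≠ x := hyH.2
  have hyH' : y ∈ H := hyH.1
  have hxQ1 : x ∉ Q1.support := by
    intro hxQ
    exact hyx ((hinterQ x hxQ Q2.end_mem_support)).symm
  have hc1P1 : c1 ∉ P1.support := by
    intro hc1P
    have hc1x : c1 = x := hinter12 c1 hc1P P2.end_mem_support
    exact hq0x (path_loop_support hP2p hc1x.symm q0 hq0P2)
  have hconsP : (Walk.cons h12 P1).IsPath := by
    rw [Walk.cons_isPath_iff]; exact ⟨hP1p, hc1P1⟩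
  have hSpath : (Q1.reverse.append (Walk.cons h12 P1)).IsPath := by
    refine isPath_append hQ1p.reverse hconsP ?_
    intro v hv hv'
    rw [Walk.support_reverse, List.mem_reverse] at hv
    rw [Walk.support_cons, List.mem_cons] at hv'
    rcases hv' with rfl | hv'
    · rfl
    · exfalso
      have hvP2 : v ∈ P2.support := by
        have hh : v ∈ P2.reverse.support := by
          rw [← happ2]; exact support_append_subset_left _ _ hv
        rwa [Walk.support_reverse, List.mem_reverse] at hh
      have hvx : v = x := hinter12 v hv' hvP2
      exact hxQ1 (hvx ▸ hv)
  refine ⟨x, y, Q1.reverse.append (Walk.cons h12 P1), hxH, hyH', hyx.symm, hSpath, ?_, ?_, ?_⟩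
  · rw [Walk.edges_append, Walk.edges_cons]
    exact List.mem_append_right _ (List.mem_cons_self)
  · intro v hv
    rw [Walk.mem_support_append_iff] at hv
    rcases hv with hv | hv
    · rw [Walk.support_reverse, List.mem_reverse] at hv
      have hvP2 : v ∈ P2.support := by
        have hh : v ∈ P2.reverse.support := by
          rw [← happ2]; exact support_append_subset_left _ _ hv
        rwa [Walk.support_reverse, List.mem_reverse] at hh
      exact (hiff v).mpr (by rw [← happ1]; exact support_append_subset_right _ _ hvP2)
    · rw [Walk.support_cons, List.mem_cons] at hv
      rcases hv with rfl | hv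
      · exact (hiff v).mpr Pw.end_mem_support
      · exact (hiff v).mpr (by rw [← happ1]; exact support_append_subset_left _ _ hv)
  · intro v hv hvH
    rw [Walk.mem_support_append_iff] at hv
    rcases hv with hv | hv
    · rw [Walk.support_reverse, List.mem_reverse] at hv
      by_cases hvx : v = x
      · exact Or.inl hvx
      · exact Or.inr (hQ1 v hv ⟨hvH, hvx⟩)
    · rw [Walk.support_cons, List.mem_cons] at hv
      rcases hv with rfl | hv
      · by_cases hvx : v = x
        · exact Or.inl hvx
        · exact Or.inr (hQ1 v Q1.start_mem_support ⟨hvH, hvx⟩)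
      · exact Or.inl (hP1 v hv hvH)

lemma exists_avoid_walk (hG : IsBlock G) (x u v : V) (hu : u ≠ x) (hv : v ≠ x) :
    ∃ W : G.Walk u v, ∀ z ∈ W.support, z ≠ x := by
  have hconn := hG.2 x
  have hu' : u ∈ ((⊤ : G.Subgraph).deleteVerts {x}).verts := by simp [hu]
  have hv' : v ∈ ((⊤ : G.Subgraph).deleteVerts {x}).verts := by simp [hv]
  obtain ⟨W'⟩ := hconn.preconnected ⟨u, hu'⟩ ⟨v, hv'⟩
  refine ⟨W'.map (SimpleGraph.Subgraph.hom _), ?_⟩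
  intro z hz
  have hz' : z ∈ (W'.map (SimpleGraph.Subgraph.hom _)).support := hz
  rw [Walk.support_map, List.mem_map] at hz'
  replace hz := hz'
  obtain ⟨z', _, rfl⟩ := hz
  have hz2 := z'.2
  simp only [Subgraph.deleteVerts_verts, Subgraph.verts_top, Set.mem_diff,
    Set.mem_singleton_iff] at hz2
  exact hz2.2

lemma no_two_paths {a : V} {w : G.Walk a a} (hw : w.IsCycle) {e : Sym2 V}
    (he : e ∈ w.edges)
    (hbat : ∀ s : Finset (Sym2 V), IsCircleOf G s → e ∈ s → esign σ s = 1 →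
      s = w.edges.toFinset)
    {x y : V} (hxy : x ≠ y) (T1 T2 : G.Walk x y) (S : G.Walk y x)
    (hT1 : T1.IsPath) (hT2 : T2.IsPath) (hS : S.IsPath) (heS : e ∈ S.edges)
    (hi1 : ∀ v ∈ T1.support, v ∈ S.support → v = x ∨ v = y)
    (hi2 : ∀ v ∈ T2.support, v ∈ S.support → v = x ∨ v = y)
    {f1 f2 : Sym2 V} (hf1 : f1 ∈ T1.edges) (hf2 : f2 ∈ T2.edges)
    (hf1w : f1 ∉ w.edges) (hf2w : f2 ∉ w.edges)
    (hsgn : wsign σ T1 * wsign σ T2 = -1) : False := by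
  have hlen : ∀ (T : G.Walk x y) (f : Sym2 V), T.IsPath → f ∈ T.edges → f ∉ w.edges →
      2 ≤ T.length ∨ 2 ≤ S.length := by
    intro T f hTp hf hfw
    by_contra hcon
    push_neg at hcon
    have hT1le : T.length = 1 := by
      have := length_pos_of_ne (p := T) hxy; omega
    have hSle : S.length = 1 := by
      have := length_pos_of_ne (p := S) (Ne.symm hxy); omega
    have hTe : T.edges = [s(x, y)] := edges_of_length_one hT1le
    have hSe : S.edges = [s(y, x)] := edges_of_length_one hSle
    rw [hTe, List.mem_singleton] at hf
    have heS' := heS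
    rw [hSe, List.mem_singleton] at heS'
    have hfe : f = e := by rw [hf, heS']; exact Sym2.eq_swap
    exact hfw (hfe ▸ he)
  have key : ∀ (T : G.Walk x y) (f : Sym2 V), T.IsPath →
      (∀ v ∈ T.support, v ∈ S.support → v = x ∨ v = y) →
      f ∈ T.edges → f ∉ w.edges → wsign σ T * wsign σ S = 1 → False := by
    intro T f hTp hiT hf hfw hTS
    have hcyc : (T.append S).IsCycle := isCycle_append hxy hTp hS hiT (hlen T f hTp hf hfw)
    have hcirc : IsCircleOf G (T.append S).edges.toFinset := ⟨x, _, hcyc, rfl⟩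
    have hesign : esign σ (T.append S).edges.toFinset = 1 := by
      rw [esign_eq_wsign hcyc.isCircuit.isTrail, wsign_append]; exact hTS
    have hmem : e ∈ (T.append S).edges.toFinset := by
      rw [List.mem_toFinset, Walk.edges_append]
      exact List.mem_append_right _ heS
    have heq := hbat _ hcirc hmem hesign
    have hfww : f ∈ w.edges := by
      have hh : f ∈ (T.append S).edges.toFinset := by
        rw [List.mem_toFinset, Walk.edges_append]; exact List.mem_append_left _ hf
      rw [heq, List.mem_toFinset] at hh
      exact hh
    exact hfw hfww
  have hprod : (wsign σ T1 * wsign σ S) * (wsign σ T2 * wsign σ S) = -1 := by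
    have hh : (wsign σ T1 * wsign σ S) * (wsign σ T2 * wsign σ S)
        = (wsign σ T1 * wsign σ T2) * (wsign σ S * wsign σ S) := mul_mul_mul_comm _ _ _ _
    rw [hh, hsgn, unit_sq, mul_one]
  rcases Int.units_eq_one_or (wsign σ T1 * wsign σ S) with h1 | h1
  · exact key T1 f1 hT1 hi1 hf1 hf1w h1
  · have h2 : wsign σ T2 * wsign σ S = 1 := by
      rw [h1] at hprod
      rcases Int.units_eq_one_or (wsign σ T2 * wsign σ S) with h | h
      · exact h
      · rw [h] at hprod; simp at hprod
    exact key T2 f2 hT2 hi2 hf2 hf2w h2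
lemma one_hit {a : V} {w : G.Walk a a} (hG : IsBlock G) (hw : w.IsCycle) {e : Sym2 V}
    (he : e ∈ w.edges)
    (hbat : ∀ s : Finset (Sym2 V), IsCircleOf G s → e ∈ s → esign σ s = 1 →
      s = w.edges.toFinset)
    {x : V} (N : G.Walk x x) (hN : N.IsCycle) (hNs : wsign σ N = -1)
    (hxw : x ∈ w.support) (hhit : ∀ v ∈ N.support, v ∈ w.support → v = x) : False := by
  have hv0 : ∃ v0 ∈ N.support, v0 ≠ x := by
    cases N with
    | nil => exact absurd hN Walk.IsCycle.not_of_nil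
    | @cons _ b _ h0 q =>
      exact ⟨b, by rw [Walk.support_cons]; exact List.mem_cons_of_mem _ q.start_mem_support,
        (h0.ne).symm⟩
  have hc0 : ∃ c0 ∈ w.support, c0 ≠ x := by
    obtain ⟨c1, c2, h12, Pw, hPw, heq, hiff⟩ := cycle_edge_decomp hw he
    have hc1 : c1 ∈ w.support := (hiff c1).mpr Pw.end_mem_support
    have hc2 : c2 ∈ w.support := (hiff c2).mpr Pw.start_mem_support
    by_cases h : c1 = x
    · exact ⟨c2, hc2, fun hh => h12.ne (by rw [h, hh])⟩
    · exact ⟨c1, hc1, h⟩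
  obtain ⟨v0, hv0N, hv0x⟩ := hv0
  obtain ⟨c0, hc0w, hc0x⟩ := hc0
  obtain ⟨W, hWx⟩ := exists_avoid_walk hG x v0 c0 hv0x hc0x
  obtain ⟨u', A1, A2, happA, hu'N, hA1⟩ := exists_firstTouch W.reverse {v | v ∈ N.support}
    ⟨v0, W.reverse.end_mem_support, hv0N⟩
  obtain ⟨y2, B1, B2, happB, hy2w, hB1⟩ := exists_firstTouch A1.reverse {v | v ∈ w.support}
    ⟨c0, A1.reverse.end_mem_support, hc0w⟩
  have hBp : B1.bypass.IsPath := B1.bypass_isPath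
  set B := B1.bypass with hBdef
  have hBsub : B.support ⊆ B1.support := B1.support_bypass_subset
  have hB1subA1 : B1.support ⊆ A1.support := by
    intro v hv
    have hh : v ∈ A1.reverse.support := by rw [← happB]; exact support_append_subset_left _ _ hv
    rwa [Walk.support_reverse, List.mem_reverse] at hh
  have hA1subW : A1.support ⊆ W.support := by
    intro v hv
    have hh : v ∈ W.reverse.support := by rw [← happA]; exact support_append_subset_left _ _ hv
    rwa [Walk.support_reverse, List.mem_reverse] at hh
  have hBN : ∀ v ∈ B.support, v ∈ N.support → v = u' := fun v hv => hA1 v (hB1subA1 (hBsub hv))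
  have hBw : ∀ v ∈ B.support, v ∈ w.support → v = y2 := fun v hv => hB1 v (hBsub hv)
  have hu'x : u' ≠ x := hWx u' (hA1subW A1.end_mem_support)
  have hy2x : y2 ≠ x := hWx y2 (hA1subW (hB1subA1 (hBsub B.end_mem_support)))
  have hy2w' : y2 ∈ w.support := hy2w
  have hu'N' : u' ∈ N.support := hu'N
  have hy2N : y2 ∉ N.support := fun h => hy2x (hhit y2 h hy2w')
  have hxy2 : x ≠ y2 := fun h => hy2x h.symm
  obtain ⟨hR1p, hR2p⟩ := cycle_split hN hu'N' hu'x
  set R1 := N.takeUntil u' hu'N' with hR1def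
  set R2 := (N.dropUntil u' hu'N').reverse with hR2def
  have hR2p' : R2.IsPath := hR2p.reverse
  have hsignR : wsign σ R1 * wsign σ R2 = -1 := by
    have hh := congrArg (wsign σ) (N.take_spec hu'N')
    rw [wsign_append] at hh
    rw [hR2def, wsign_reverse, hh, hNs]
  have hR1subN : ∀ v ∈ R1.support, v ∈ N.support :=
    fun v h => N.support_takeUntil_subset hu'N' h
  have hR2subN : ∀ v ∈ R2.support, v ∈ N.support := by
    intro v h
    rw [hR2def, Walk.support_reverse, List.mem_reverse] at h
    exact N.support_dropUntil_subset hu'N' h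
  set T1 := R1.append B with hT1def
  set T2 := R2.append B with hT2def
  have hT1p : T1.IsPath :=
    isPath_append hR1p hBp (fun v hv hv' => hBN v hv' (hR1subN v hv))
  have hT2p : T2.IsPath :=
    isPath_append hR2p' hBp (fun v hv hv' => hBN v hv' (hR2subN v hv))
  have hTsgn : wsign σ T1 * wsign σ T2 = -1 := by
    rw [hT1def, hT2def, wsign_append, wsign_append, mul_mul_mul_comm, hsignR, unit_sq, mul_one]
  have hT1nn : ¬T1.Nil := not_nil_of_ne hxy2
  have hT2nn : ¬T2.Nil := not_nil_of_ne hxy2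
  obtain ⟨f1, hf1, hf1u⟩ :=
    exists_incident_edge (support_append_subset_left R1 B R1.end_mem_support) hT1nn
  obtain ⟨f2, hf2, hf2u⟩ :=
    exists_incident_edge (support_append_subset_left R2 B R2.end_mem_support) hT2nn
  have hf1w : f1 ∉ w.edges := fun hfw =>
    hu'x (hhit u' hu'N' (mem_support_of_mem_edge hfw hf1u))
  have hf2w : f2 ∉ w.edges := fun hfw =>
    hu'x (hhit u' hu'N' (mem_support_of_mem_edge hfw hf2u))
  obtain ⟨x', y', S, hx'H, hy'H, hx'y', hSp, heS, hSw, hSH⟩ :=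
    exists_arc hw he {v | v = x ∨ v = y2} (by rintro v (rfl | rfl); exacts [hxw, hy2w'])
      (p := x) (q := y2) (Or.inl rfl) (Or.inr rfl) hxy2
  have hT1sub : ∀ v ∈ T1.support, v ∈ N.support ∨ v ∈ B.support := by
    intro v hv
    rw [hT1def, Walk.mem_support_append_iff] at hv
    rcases hv with hv | hv
    · exact Or.inl (hR1subN v hv)
    · exact Or.inr hv
  have hT2sub : ∀ v ∈ T2.support, v ∈ N.support ∨ v ∈ B.support := by
    intro v hv
    rw [hT2def, Walk.mem_support_append_iff] at hv
    rcases hv with hv | hv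
    · exact Or.inl (hR2subN v hv)
    · exact Or.inr hv
  have hinter : ∀ (T : G.Walk x y2), (∀ v ∈ T.support, v ∈ N.support ∨ v ∈ B.support) →
      ∀ v ∈ T.support, v ∈ S.support → v = x ∨ v = y2 := by
    intro T hTsub v hv hvS
    have hvw : v ∈ w.support := hSw v hvS
    rcases hTsub v hv with h | h
    · exact Or.inl (hhit v h hvw)
    · exact Or.inr (hBw v h hvw)
  rcases hx'H with rfl | rfl <;> rcases hy'H with rfl | rfl
  · exact absurd rfl hx'y'
  · -- x' = x, y' = y2, S : y2 → x
    exact no_two_paths hw he hbat hxy2 T1 T2 S hT1p hT2p hSp heS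
      (hinter T1 hT1sub) (hinter T2 hT2sub) hf1 hf2 hf1w hf2w hTsgn
  · -- x' = y2, y' = x, S : x → y2
    refine no_two_paths hw he hbat (Ne.symm hxy2) T1.reverse T2.reverse S
      hT1p.reverse hT2p.reverse hSp heS ?_ ?_
      (by rw [Walk.edges_reverse, List.mem_reverse]; exact hf1)
      (by rw [Walk.edges_reverse, List.mem_reverse]; exact hf2)
      hf1w hf2w (by rw [wsign_reverse, wsign_reverse]; exact hTsgn)
    · intro v hv hvS
      rw [Walk.support_reverse, List.mem_reverse] at hv
      exact Or.symm (hinter T1 hT1sub v hv hvS)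
    · intro v hv hvS
      rw [Walk.support_reverse, List.mem_reverse] at hv
      exact Or.symm (hinter T2 hT2sub v hv hvS)
  · exact absurd rfl hx'y'
lemma arrange4 (p b r1 r2 : ℤˣ) :
    ((p * r1) * b) * ((p * r2) * b) = (r1 * r2) * ((p * p) * (b * b)) := by ac_rfl

lemma arrange4' (r1 r2 b j : ℤˣ) :
    ((r1 * b) * j) * ((r2 * b) * j) = (r1 * r2) * ((b * b) * (j * j)) := by ac_rfl

lemma zero_hit {a : V} {w : G.Walk a a} (hG : IsBlock G) (hw : w.IsCycle) {e : Sym2 V}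
    (he : e ∈ w.edges)
    (hbat : ∀ s : Finset (Sym2 V), IsCircleOf G s → e ∈ s → esign σ s = 1 →
      s = w.edges.toFinset) :
    ∀ (n : ℕ) (u yy : V) (N : G.Walk u u) (P : G.Walk u yy), N.IsCycle → wsign σ N = -1 →
      (∀ v ∈ N.support, v ∉ w.support) → P.IsPath → yy ∈ w.support →
      (∀ v ∈ P.support, v ∈ N.support → v = u) → (∀ v ∈ P.support, v ∈ w.support → v = yy) →
      P.length ≤ n → False := by
  intro n
  induction n with
  | zero =>
    intro u yy N P hN hNs hNw hPp hyyw hPN hPw hlen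
    have hl0 : P.length = 0 := Nat.le_zero.mp hlen
    have huyy : u = yy := by cases P with | nil => rfl | cons h q => simp at hl0
    exact hNw u N.start_mem_support (huyy ▸ hyyw)
  | succ n ih =>
    intro u yy N P hN hNs hNw hPp hyyw hPN hPw hlen
    have hv0 : ∃ v0 ∈ N.support, v0 ≠ u := by
      cases N with
      | nil => exact absurd hN Walk.IsCycle.not_of_nil
      | @cons _ b _ h0 q =>
        exact ⟨b, by rw [Walk.support_cons]; exact List.mem_cons_of_mem _ q.start_mem_support,
          (h0.ne).symm⟩
    obtain ⟨v0, hv0N, hv0u⟩ := hv0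
    have huw : u ∉ w.support := hNw u N.start_mem_support
    have huyy : u ≠ yy := fun h => huw (h ▸ hyyw)
    obtain ⟨W, hWu⟩ := exists_avoid_walk hG u v0 yy hv0u (Ne.symm huyy)
    obtain ⟨z, A1, A2, happA, hzN, hA1⟩ := exists_firstTouch W.reverse {v | v ∈ N.support}
      ⟨v0, W.reverse.end_mem_support, hv0N⟩
    obtain ⟨qq, B1, B2, happB, hqX, hB1⟩ := exists_firstTouch A1.reverse
      {v | v ∈ w.support ∨ v ∈ P.support}
      ⟨yy, A1.reverse.end_mem_support, Or.inl hyyw⟩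
    have hBp : B1.bypass.IsPath := B1.bypass_isPath
    set B := B1.bypass with hBdef
    have hBsub : B.support ⊆ B1.support := B1.support_bypass_subset
    have hB1subA1 : B1.support ⊆ A1.support := by
      intro v hv
      have hh : v ∈ A1.reverse.support := by rw [← happB]; exact support_append_subset_left _ _ hv
      rwa [Walk.support_reverse, List.mem_reverse] at hh
    have hA1subW : A1.support ⊆ W.support := by
      intro v hv
      have hh : v ∈ W.reverse.support := by rw [← happA]; exact support_append_subset_left _ _ hv
      rwa [Walk.support_reverse, List.mem_reverse] at hh
    have hBN : ∀ v ∈ B.support, v ∈ N.support → v = z := fun v hv => hA1 v (hB1subA1 (hBsub hv))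
    have hBX : ∀ v ∈ B.support, (v ∈ w.support ∨ v ∈ P.support) → v = qq :=
      fun v hv => hB1 v (hBsub hv)
    have hBu : ∀ v ∈ B.support, v ≠ u := fun v hv => hWu v (hA1subW (hB1subA1 (hBsub hv)))
    have hzu : z ≠ u := hWu z (hA1subW (hB1subA1 (hBsub B.start_mem_support)))
    have hzN' : z ∈ N.support := hzN
    have hznw : z ∉ w.support := hNw z hzN'
    have hqu : qq ≠ u := hBu qq B.end_mem_support
    obtain ⟨hR1p, hR2p⟩ := cycle_split hN hzN' hzu
    set R1 := N.takeUntil z hzN' with hR1def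
    set R2 := (N.dropUntil z hzN').reverse with hR2def
    have hR2p' : R2.IsPath := hR2p.reverse
    have hsignR : wsign σ R1 * wsign σ R2 = -1 := by
      have hh := congrArg (wsign σ) (N.take_spec hzN')
      rw [wsign_append] at hh
      rw [hR2def, wsign_reverse, hh, hNs]
    have hR1subN : ∀ v ∈ R1.support, v ∈ N.support :=
      fun v h => N.support_takeUntil_subset hzN' h
    have hR2subN : ∀ v ∈ R2.support, v ∈ N.support := by
      intro v h
      rw [hR2def, Walk.support_reverse, List.mem_reverse] at h
      exact N.support_dropUntil_subset hzN' h
    have hR1len : 1 ≤ R1.length := length_pos_of_ne (p := R1) (Ne.symm hzu)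
    have hR2len : 1 ≤ R2.length := length_pos_of_ne (p := R2) (Ne.symm hzu)
    by_cases hqw : qq ∈ w.support
    · -- the new connection reaches the circle w
      have hzq : z ≠ qq := fun h => hznw (h ▸ hqw)
      by_cases hqyy : qq = yy
      · -- it reaches at yy : build a one-hit negative cycle through yy
        subst hqyy
        have hTgen : ∀ (R : G.Walk u z), R.IsPath → (∀ v ∈ R.support, v ∈ N.support) →
            ((P.reverse.append R).append B).IsCycle ∧
            (∀ v ∈ ((P.reverse.append R).append B).support, v ∈ w.support → v = qq) := by
          intro R hRp hRsub
          have hTp : (P.reverse.append R).IsPath := by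
            refine isPath_append hPp.reverse hRp ?_
            intro v hv hv'
            rw [Walk.support_reverse, List.mem_reverse] at hv
            exact hPN v hv (hRsub v hv')
          have hqz : qq ≠ z := Ne.symm hzq
          have hTmem : ∀ v ∈ (P.reverse.append R).support,
              v ∈ P.support ∨ v ∈ R.support := by
            intro v hv
            rw [Walk.mem_support_append_iff] at hv
            rcases hv with hv | hv
            · rw [Walk.support_reverse, List.mem_reverse] at hv; exact Or.inl hv
            · exact Or.inr hv
          have hint : ∀ v ∈ (P.reverse.append R).support, v ∈ B.support → v = qq ∨ v = z := by
            intro v hv hvB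
            rcases hTmem v hv with hv | hv
            · exact Or.inl (hBX v hvB (Or.inr hv))
            · exact Or.inr (hBN v hvB (hRsub v hv))
          have hlenT : 2 ≤ (P.reverse.append R).length := by
            rw [Walk.length_append, Walk.length_reverse]
            have h1 := length_pos_of_ne (p := P) huyy
            have h2 := length_pos_of_ne (p := R) (Ne.symm hzu)
            omega
          refine ⟨isCycle_append hqz hTp hBp hint (Or.inl hlenT), ?_⟩
          intro v hv hvw
          rw [Walk.mem_support_append_iff] at hv
          rcases hv with hv | hv
          · rcases hTmem v hv with hv | hv
            · exact hPw v hv hvw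
            · exact absurd hvw (hNw v (hRsub v hv))
          · exact hBX v hv (Or.inl hvw)
        obtain ⟨hM1c, hM1mem⟩ := hTgen R1 hR1p hR1subN
        obtain ⟨hM2c, hM2mem⟩ := hTgen R2 hR2p' hR2subN
        have hMprod : wsign σ ((P.reverse.append R1).append B)
            * wsign σ ((P.reverse.append R2).append B) = -1 := by
          rw [wsign_append, wsign_append, wsign_append, wsign_append, arrange4, hsignR,
            unit_sq, unit_sq, mul_one, mul_one]
        rcases Int.units_eq_one_or (wsign σ ((P.reverse.append R1).append B)) with h1 | h1
        · have h2 : wsign σ ((P.reverse.append R2).append B) = -1 := by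
            rw [h1, one_mul] at hMprod; exact hMprod
          exact one_hit hG hw he hbat _ hM2c h2 hyyw hM2mem
        · exact one_hit hG hw he hbat _ hM1c h1 hyyw hM1mem
      · -- it reaches w at qq ≠ yy : two paths from yy to qq
        have hqP : qq ∉ P.support := fun h => hqyy (hPw qq h hqw)
        have hyyq : yy ≠ qq := Ne.symm hqyy
        have hTgen : ∀ (R : G.Walk u z), R.IsPath → (∀ v ∈ R.support, v ∈ N.support) →
            ((P.reverse.append R).append B).IsPath := by
          intro R hRp hRsub
          have hTp : (P.reverse.append R).IsPath := by
            refine isPath_append hPp.reverse hRp ?_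
            intro v hv hv'
            rw [Walk.support_reverse, List.mem_reverse] at hv
            exact hPN v hv (hRsub v hv')
          refine isPath_append hTp hBp ?_
          intro v hv hvB
          rw [Walk.mem_support_append_iff] at hv
          rcases hv with hv | hv
          · rw [Walk.support_reverse, List.mem_reverse] at hv
            exact absurd ((hBX v hvB (Or.inr hv)) ▸ hv) hqP
          · exact hBN v hvB (hRsub v hv)
        have hT1p := hTgen R1 hR1p hR1subN
        have hT2p := hTgen R2 hR2p' hR2subN
        set T1 := (P.reverse.append R1).append B with hT1def
        set T2 := (P.reverse.append R2).append B with hT2def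
        have hTsgn : wsign σ T1 * wsign σ T2 = -1 := by
          rw [hT1def, hT2def, wsign_append, wsign_append, wsign_append, wsign_append,
            arrange4, hsignR, unit_sq, unit_sq, mul_one, mul_one]
        have hzT1 : z ∈ T1.support := support_append_subset_right _ _ B.start_mem_support
        have hzT2 : z ∈ T2.support := support_append_subset_right _ _ B.start_mem_support
        obtain ⟨f1, hf1, hf1z⟩ := exists_incident_edge hzT1 (not_nil_of_ne hyyq)
        obtain ⟨f2, hf2, hf2z⟩ := exists_incident_edge hzT2 (not_nil_of_ne hyyq)
        have hf1w : f1 ∉ w.edges := fun hfw => hznw (mem_support_of_mem_edge hfw hf1z)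
        have hf2w : f2 ∉ w.edges := fun hfw => hznw (mem_support_of_mem_edge hfw hf2z)
        obtain ⟨x', y', S, hx'H, hy'H, hx'y', hSp, heS, hSw, hSH⟩ :=
          exists_arc hw he {v | v = yy ∨ v = qq} (by rintro v (rfl | rfl); exacts [hyyw, hqw])
            (p := yy) (q := qq) (Or.inl rfl) (Or.inr rfl) hyyq
        have hinter : ∀ (T : G.Walk yy qq),
            (∀ v ∈ T.support, v ∈ P.support ∨ v ∈ N.support ∨ v ∈ B.support) →
            ∀ v ∈ T.support, v ∈ S.support → v = yy ∨ v = qq := by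
          intro T hTsub v hv hvS
          have hvw : v ∈ w.support := hSw v hvS
          rcases hTsub v hv with h | h | h
          · exact Or.inl (hPw v h hvw)
          · exact absurd hvw (hNw v h)
          · exact Or.inr (hBX v h (Or.inl hvw))
        have hTsub : ∀ (R : G.Walk u z), (∀ v ∈ R.support, v ∈ N.support) →
            ∀ v ∈ ((P.reverse.append R).append B).support,
              v ∈ P.support ∨ v ∈ N.support ∨ v ∈ B.support := by
          intro R hRsub v hv
          rw [Walk.mem_support_append_iff, Walk.mem_support_append_iff] at hv
          rcases hv with (hv | hv) | hv
          · rw [Walk.support_reverse, List.mem_reverse] at hv; exact Or.inl hv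
          · exact Or.inr (Or.inl (hRsub v hv))
          · exact Or.inr (Or.inr hv)
        rcases hx'H with rfl | rfl <;> rcases hy'H with rfl | rfl
        · exact absurd rfl hx'y'
        · exact no_two_paths hw he hbat hyyq T1 T2 S hT1p hT2p hSp heS
            (hinter T1 (hTsub R1 hR1subN)) (hinter T2 (hTsub R2 hR2subN))
            hf1 hf2 hf1w hf2w hTsgn
        · refine no_two_paths hw he hbat (Ne.symm hyyq) T1.reverse T2.reverse S
            hT1p.reverse hT2p.reverse hSp heS ?_ ?_
            (by rw [Walk.edges_reverse, List.mem_reverse]; exact hf1)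
            (by rw [Walk.edges_reverse, List.mem_reverse]; exact hf2)
            hf1w hf2w (by rw [wsign_reverse, wsign_reverse]; exact hTsgn)
          · intro v hv hvS
            rw [Walk.support_reverse, List.mem_reverse] at hv
            exact Or.symm (hinter T1 (hTsub R1 hR1subN) v hv hvS)
          · intro v hv hvS
            rw [Walk.support_reverse, List.mem_reverse] at hv
            exact Or.symm (hinter T2 (hTsub R2 hR2subN) v hv hvS)
        · exact absurd rfl hx'y'
    · -- the new connection comes back to P : surgery and recursion
      have hqP : qq ∈ P.support := by
        rcases hqX with h | h
        · exact absurd h hqw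
        · exact h
      have hqN : qq ∉ N.support := fun h => hqu (hPN qq hqP h)
      have hzq : z ≠ qq := fun h => hqN (h ▸ hzN')
      have hyyJ : yy ∉ (P.takeUntil qq hqP).support := by
        intro h
        have hinterJK := (path_append_inter hPp (P.take_spec hqP)).2.2
        have : yy = qq := hinterJK yy h (P.dropUntil qq hqP).end_mem_support
        exact hqw (this ▸ hyyw)
      have huK : u ∉ (P.dropUntil qq hqP).support := by
        intro h
        have hinterJK := (path_append_inter hPp (P.take_spec hqP)).2.2
        exact hqu (hinterJK u (P.takeUntil qq hqP).start_mem_support h).symm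
      have hJp : (P.takeUntil qq hqP).IsPath := hPp.takeUntil hqP
      have hKp : (P.dropUntil qq hqP).IsPath := hPp.dropUntil hqP
      set J := P.takeUntil qq hqP with hJdef
      set K := P.dropUntil qq hqP with hKdef
      have hJsubP : ∀ v ∈ J.support, v ∈ P.support :=
        fun v h => P.support_takeUntil_subset hqP h
      have hKsubP : ∀ v ∈ K.support, v ∈ P.support :=
        fun v h => P.support_dropUntil_subset hqP h
      have hinterJK : ∀ v, v ∈ J.support → v ∈ K.support → v = qq :=
        (path_append_inter hPp (P.take_spec hqP)).2.2
      have hTgen : ∀ (R : G.Walk u z), R.IsPath → (∀ v ∈ R.support, v ∈ N.support) →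
          ((R.append B).append J.reverse).IsCycle := by
        intro R hRp hRsub
        have hTp : (R.append B).IsPath := by
          refine isPath_append hRp hBp ?_
          intro v hv hvB
          exact hBN v hvB (hRsub v hv)
        have huq : u ≠ qq := Ne.symm hqu
        have hint : ∀ v ∈ (R.append B).support, v ∈ J.reverse.support → v = u ∨ v = qq := by
          intro v hv hvJ
          rw [Walk.support_reverse, List.mem_reverse] at hvJ
          rw [Walk.mem_support_append_iff] at hv
          rcases hv with hv | hv
          · exact Or.inl (hPN v (hJsubP v hvJ) (hRsub v hv))
          · exact Or.inr (hBX v hv (Or.inr (hJsubP v hvJ)))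
        have hlenT : 2 ≤ (R.append B).length := by
          rw [Walk.length_append]
          have h1 := length_pos_of_ne (p := R) (Ne.symm hzu)
          have h2 := length_pos_of_ne (p := B) hzq
          omega
        exact isCycle_append huq hTp hJp.reverse hint (Or.inl hlenT)
      have hM1c := hTgen R1 hR1p hR1subN
      have hM2c := hTgen R2 hR2p' hR2subN
      have hMprod : wsign σ ((R1.append B).append J.reverse)
          * wsign σ ((R2.append B).append J.reverse) = -1 := by
        rw [wsign_append, wsign_append, wsign_append, wsign_append, arrange4', hsignR,
          unit_sq, unit_sq, mul_one, mul_one]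
      have hMmem : ∀ (R : G.Walk u z), (∀ v ∈ R.support, v ∈ N.support) →
          ∀ v ∈ ((R.append B).append J.reverse).support,
            (v ∈ w.support → False) ∧ (v ∈ K.support → v = qq) := by
        intro R hRsub v hv
        rw [Walk.mem_support_append_iff, Walk.mem_support_append_iff] at hv
        constructor
        · intro hvw
          rcases hv with (hv | hv) | hv
          · exact hNw v (hRsub v hv) hvw
          · have := hBX v hv (Or.inl hvw)
            exact hqw (this ▸ hvw)
          · rw [Walk.support_reverse, List.mem_reverse] at hv
            have := hPw v (hJsubP v hv) hvw
            exact hyyJ (this ▸ hv)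
        · intro hvK
          rcases hv with (hv | hv) | hv
          · exact absurd ((hPN v (hKsubP v hvK) (hRsub v hv)) ▸ hvK) huK
          · exact hBX v hv (Or.inr (hKsubP v hvK))
          · rw [Walk.support_reverse, List.mem_reverse] at hv
            exact hinterJK v hv hvK
      have hKlen : K.length ≤ n := by
        have hh := congrArg Walk.length (P.take_spec hqP)
        rw [Walk.length_append, ← hJdef, ← hKdef] at hh
        have h1 := length_pos_of_ne (p := J) (Ne.symm hqu)
        omega
      have hqM : ∀ (R : G.Walk u z),
          qq ∈ ((R.append B).append J.reverse).support :=
        fun R => support_append_subset_right _ _ J.reverse.start_mem_support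
      have hfin : ∀ (R : G.Walk u z), (∀ v ∈ R.support, v ∈ N.support) →
          ((R.append B).append J.reverse).IsCycle →
          wsign σ ((R.append B).append J.reverse) = -1 → False := by
        intro R hRsub hMc hMs
        refine ih qq yy (((R.append B).append J.reverse).rotate qq (hqM R)) K
          (hMc.rotate _) (by rw [wsign_rotate]; exact hMs) ?_ hKp hyyw ?_ ?_ hKlen
        · intro v hv
          rw [mem_support_rotate] at hv
          exact fun hvw => (hMmem R hRsub v hv).1 hvw
        · intro v hv hvM
          rw [mem_support_rotate] at hvM
          exact (hMmem R hRsub v hvM).2 hv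
        · intro v hv hvw
          exact hPw v (hKsubP v hv) hvw
      rcases Int.units_eq_one_or (wsign σ ((R1.append B).append J.reverse)) with h1 | h1
      · have h2 : wsign σ ((R2.append B).append J.reverse) = -1 := by
          rw [h1, one_mul] at hMprod; exact hMprod
        exact hfin R2 hR2subN hM2c h2
      · exact hfin R1 hR1subN hM1c h1
end BPB

theorem bridges_of_positive_battery_balanced {V : Type*} [DecidableEq V]
    (G : SimpleGraph V) (σ : Sym2 V → ℤˣ) (hG : IsBlock G)
    {a : V} (w : G.Walk a a) (hw : w.IsCycle)
    (hnc : ∃ g ∈ G.edgeSet, g ∉ w.edges)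
    -- `e` lies in a unique positive circle, namely `C`:
    (e : Sym2 V) (he : e ∈ w.edges)
    (hbat : esign σ w.edges.toFinset = 1 ∧
      ∀ s : Finset (Sym2 V), IsCircleOf G s → e ∈ s → esign σ s = 1 →
        s = w.edges.toFinset) :
    -- every bridge of `C` is balanced:
    ∀ F : Set (Sym2 V), IsBridgeOf G w F →
      ∀ (b : V) (w' : G.Walk b b), w'.IsCycle → (∀ f ∈ w'.edges, f ∈ F) →
        esign σ w'.edges.toFinset = 1 := by
  rintro F hF b w' hw' hFe
  rcases Int.units_eq_one_or (esign σ w'.edges.toFinset) with h1 | hneg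
  · exact h1
  exfalso
  have hw's : wsign σ w' = -1 := by
    rw [← BPB.esign_eq_wsign hw'.isCircuit.isTrail]; exact hneg
  rcases hF with ⟨x0, y0, hxy0, hx0w, hy0w, hadj0, hnotin, rfl⟩ |
    ⟨D, hDne, hDw, hDconn, hDcl, rfl⟩
  · -- chord case: a cycle cannot have all edges equal to a single chord
    have h3 := hw'.three_le_length
    have hnodup := hw'.isCircuit.isTrail.edges_nodup
    have hlen : w'.edges.length = w'.length := w'.length_edges
    obtain ⟨f0, tl, hE⟩ : ∃ f0 tl, w'.edges = f0 :: tl := by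
      cases hE : w'.edges with
      | nil => rw [hE] at hlen; simp at hlen; omega
      | cons f0 tl => exact ⟨f0, tl, rfl⟩
    obtain ⟨f1, tl2, hE2⟩ : ∃ f1 tl2, tl = f1 :: tl2 := by
      cases hE2 : tl with
      | nil => rw [hE, hE2] at hlen; simp at hlen; omega
      | cons f1 tl2 => exact ⟨f1, tl2, rfl⟩
    have h0 : f0 = s(x0, y0) :=
      Set.mem_singleton_iff.mp (hFe f0 (by rw [hE]; exact List.mem_cons_self))
    have h1' : f1 = s(x0, y0) :=
      Set.mem_singleton_iff.mp
        (hFe f1 (by rw [hE, hE2]; exact List.mem_cons_of_mem _ (List.mem_cons_self)))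
    rw [hE, hE2, List.nodup_cons] at hnodup
    exact hnodup.1 (by rw [h0, ← h1']; exact List.mem_cons_self)
  · -- component case
    have hedges : ∀ f ∈ w'.edges, f ∉ w.edges := by
      intro f hf hfw
      obtain ⟨hfE, d, hdD, hdf⟩ := hFe f hf
      exact hDw d hdD (BPB.mem_support_of_mem_edge hfw hdf)
    by_cases hx : ∃ p, p ∈ w'.support ∧ p ∈ w.support
    · obtain ⟨x0, hx0w', hx0w⟩ := hx
      by_cases hq : ∃ q, q ∈ w'.support ∧ q ∈ w.support ∧ q ≠ x0
      · -- at least two hits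
        obtain ⟨q0, hq0w', hq0w, hq0x⟩ := hq
        obtain ⟨x', y', S, hx'H, hy'H, hx'y', hSp, heS, hSw, hSH⟩ :=
          BPB.exists_arc hw he {v | v ∈ w'.support ∧ v ∈ w.support}
            (fun v hv => hv.2) (p := x0) (q := q0) ⟨hx0w', hx0w⟩ ⟨hq0w', hq0w⟩
            (Ne.symm hq0x)
        have hx'w' : x' ∈ w'.support := hx'H.1
        have hwrc : (w'.rotate x' hx'w').IsCycle := hw'.rotate _
        have hy'wr : y' ∈ (w'.rotate x' hx'w').support := by
          rw [BPB.mem_support_rotate]; exact hy'H.1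
        obtain ⟨hT1p, hT2p⟩ := BPB.cycle_split hwrc hy'wr (Ne.symm hx'y')
        set T1 := (w'.rotate x' hx'w').takeUntil y' hy'wr with hT1def
        set T2' := (w'.rotate x' hx'w').dropUntil y' hy'wr with hT2def
        have hsgn : wsign σ T1 * wsign σ T2'.reverse = -1 := by
          have hh := congrArg (wsign σ) ((w'.rotate x' hx'w').take_spec hy'wr)
          rw [BPB.wsign_append, ← hT1def, ← hT2def, BPB.wsign_rotate] at hh
          rw [BPB.wsign_reverse, hh, hw's]
        have hT1sub : ∀ v ∈ T1.support, v ∈ w'.support := fun v h =>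
          (BPB.mem_support_rotate hx'w').mp ((w'.rotate x' hx'w').support_takeUntil_subset hy'wr h)
        have hT2sub : ∀ v ∈ T2'.reverse.support, v ∈ w'.support := by
          intro v h
          rw [Walk.support_reverse, List.mem_reverse] at h
          exact (BPB.mem_support_rotate hx'w').mp
            ((w'.rotate x' hx'w').support_dropUntil_subset hy'wr h)
        obtain ⟨f1, hf1, _⟩ :=
          BPB.exists_incident_edge T1.start_mem_support (BPB.not_nil_of_ne hx'y')
        obtain ⟨f2, hf2, _⟩ :=
          BPB.exists_incident_edge T2'.reverse.start_mem_support (BPB.not_nil_of_ne hx'y')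
        have hf1w' : f1 ∈ w'.edges :=
          (BPB.mem_edges_rotate hx'w').mp ((w'.rotate x' hx'w').edges_takeUntil_subset hy'wr hf1)
        have hf2w' : f2 ∈ w'.edges := by
          rw [Walk.edges_reverse, List.mem_reverse] at hf2
          exact (BPB.mem_edges_rotate hx'w').mp
            ((w'.rotate x' hx'w').edges_dropUntil_subset hy'wr hf2)
        have hint : ∀ (T : G.Walk x' y'), (∀ v ∈ T.support, v ∈ w'.support) →
            ∀ v ∈ T.support, v ∈ S.support → v = x' ∨ v = y' := by
          intro T hTsub v hv hvS
          exact hSH v hvS ⟨hTsub v hv, hSw v hvS⟩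
        exact BPB.no_two_paths hw he hbat.2 hx'y' T1 T2'.reverse S hT1p hT2p.reverse hSp heS
          (hint T1 hT1sub) (hint T2'.reverse hT2sub) hf1 hf2
          (hedges f1 hf1w') (hedges f2 hf2w') hsgn
      · -- exactly one hit
        push_neg at hq
        refine BPB.one_hit hG hw he hbat.2 (w'.rotate x0 hx0w') (hw'.rotate _)
          (by rw [BPB.wsign_rotate]; exact hw's) hx0w ?_
        intro v hv hvw
        rw [BPB.mem_support_rotate] at hv
        exact hq v hv hvw
    · -- no hit
      push_neg at hx
      obtain ⟨W0⟩ := hG.1.preconnected b a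
      obtain ⟨z, A1, A2, happA, hzN, hA1⟩ :=
        BPB.exists_firstTouch W0.reverse {v | v ∈ w'.support}
          ⟨b, W0.reverse.end_mem_support, w'.start_mem_support⟩
      obtain ⟨q1, B1, B2, happB, hq1w, hB1⟩ :=
        BPB.exists_firstTouch A1.reverse {v | v ∈ w.support}
          ⟨a, A1.reverse.end_mem_support, w.start_mem_support⟩
      have hBsub : B1.bypass.support ⊆ B1.support := B1.support_bypass_subset
      have hB1subA1 : B1.support ⊆ A1.support := by
        intro v hv
        have hh : v ∈ A1.reverse.support := by
          rw [← happB]; exact BPB.support_append_subset_left _ _ hv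
        rwa [Walk.support_reverse, List.mem_reverse] at hh
      refine BPB.zero_hit hG hw he hbat.2 B1.bypass.length z q1 (w'.rotate z hzN) B1.bypass
        (hw'.rotate _) (by rw [BPB.wsign_rotate]; exact hw's) ?_ B1.bypass_isPath hq1w ?_ ?_
        le_rfl
      · intro v hv
        rw [BPB.mem_support_rotate] at hv
        exact hx v hv
      · intro v hv hvN
        rw [BPB.mem_support_rotate] at hvN
        exact hA1 v (hB1subA1 (hBsub hv)) hvN
      · intro v hv hvw
        exact hB1 v (hBsub hv) hvw
end

section
/- Let v be a vertex of a signed graph Σ contained in an unbalanced block B with deg_B(v) ≥ 3. Then v lies in at least two negative circles; in particular, v is not contained in a unique negative circle. -/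
open SimpleGraph Finset

variable {V : Type*} [DecidableEq V]

section Aux

variable {B : SimpleGraph V} {σ : Sym2 V → ℤˣ}

lemma wsign_cons {x y z : V} (h : B.Adj x y) (p : B.Walk y z) :
    wsign σ (SimpleGraph.Walk.cons h p) = σ s(x, y) * wsign σ p := by
  simp [wsign]

lemma wsign_append {x y z : V} (p : B.Walk x y) (q : B.Walk y z) :
    wsign σ (p.append q) = wsign σ p * wsign σ q := by
  simp [wsign]

lemma wsign_reverse {x y : V} (p : B.Walk x y) :
    wsign σ p.reverse = wsign σ p := by
  simp [wsign, List.prod_reverse_noncomm, ← List.map_reverse]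
  rw [← List.prod_reverse]
  simp

lemma wsign_rotate {x y : V} (c : B.Walk x x) (h : y ∈ c.support) :
    wsign σ (c.rotate y h) = wsign σ c := by
  unfold wsign
  exact List.Perm.prod_eq (((c.rotate_edges y h).perm).map σ)

lemma wsign_sq {x y : V} (p : B.Walk x y) : wsign σ p * wsign σ p = 1 :=
  Int.units_mul_self _

/-- every edge set of the form `s(v, u)` in a path ending at `v` has a unique
other endpoint. -/
lemma incident_unique {v : V} {a : V} (p : B.Walk a v) (hp : p.IsPath) :
    ∃ w : V, ∀ u, s(v, u) ∈ p.edges → u = w := by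
  induction p with
  | nil => exact ⟨v, by simp⟩
  | @cons a m v h q ih =>
    rw [SimpleGraph.Walk.cons_isPath_iff] at hp
    have hav : a ≠ v := fun e => hp.2 (e ▸ q.end_mem_support)
    by_cases hm : m = v
    · subst hm
      have hqnil : q = SimpleGraph.Walk.nil := by
        cases q with
        | nil => rfl
        | cons h' q' =>
          exact absurd q'.end_mem_support
            ((SimpleGraph.Walk.cons_isPath_iff _ _).mp hp.1).2
      subst hqnil
      refine ⟨a, fun u hu => ?_⟩
      simp only [SimpleGraph.Walk.edges_cons, SimpleGraph.Walk.edges_nil,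
        List.mem_singleton] at hu
      rw [Sym2.eq_iff] at hu
      rcases hu with ⟨rfl, rfl⟩ | ⟨h1, rfl⟩
      · exact absurd rfl hav
      · rfl
    · obtain ⟨w, hw⟩ := ih hp.1
      refine ⟨w, fun u hu => ?_⟩
      simp only [SimpleGraph.Walk.edges_cons, List.mem_cons] at hu
      rcases hu with hu | hu
      · rw [Sym2.eq_iff] at hu
        rcases hu with ⟨rfl, rfl⟩ | ⟨h1, h2⟩
        · exact absurd rfl hav
        · exact absurd h1.symm hm
      · exact hw u hu

/-- first-hit prefix of a walk. -/
lemma exists_firstHit (P : V → Prop) {u t : V} (W : B.Walk u t) (ht : P t) :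
    ∃ (d : V) (q : B.Walk u d), P d ∧ (∀ z ∈ q.support, z ∈ W.support) ∧
      (∀ z ∈ q.support, P z → z = d) := by
  induction W with
  | nil =>
    exact ⟨_, SimpleGraph.Walk.nil, ht, by simp, by simp⟩
  | @cons u m t h W' ih =>
    by_cases hu : P u
    · exact ⟨u, SimpleGraph.Walk.nil, hu, by simp, by simp⟩
    · obtain ⟨d, q, hd, hsub, hmin⟩ := ih ht
      refine ⟨d, SimpleGraph.Walk.cons h q, hd, ?_, ?_⟩
      · intro z hz
        rw [SimpleGraph.Walk.support_cons, List.mem_cons] at hz ⊢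
        rcases hz with rfl | hz
        · exact Or.inl rfl
        · exact Or.inr (hsub z hz)
      · intro z hz hPz
        rw [SimpleGraph.Walk.support_cons, List.mem_cons] at hz
        rcases hz with rfl | hz
        · exact absurd hPz hu
        · exact hmin z hz hPz

/-- gluing two paths sharing only their common endpoint gives a path. -/
lemma isPath_append {a b c : V} {p : B.Walk a b} {r : B.Walk b c}
    (hp : p.IsPath) (hr : r.IsPath)
    (h : ∀ z ∈ p.support, z ∈ r.support → z = b) : (p.append r).IsPath := by
  rw [SimpleGraph.Walk.isPath_def] at hp hr ⊢
  rw [SimpleGraph.Walk.support_append, List.nodup_append]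
  refine ⟨hp, ?_, ?_⟩
  · have := hr
    rw [r.support_eq_cons] at this
    exact (List.nodup_cons.mp this).2
  · intro z hz z' hz' hzz'
    subst hzz'
    have hzb : z = b := h z hz (List.mem_of_mem_tail hz')
    subst hzb
    have := hr
    rw [r.support_eq_cons] at this
    exact (List.nodup_cons.mp this).1 (by rwa [r.support_eq_cons, List.tail_cons] at hz')

/-- The theta exchange: given a negative cycle `c'` at `x`, an edge `s(x,y)`
not on the cycle, and a path `q` from `y` to the cycle meeting it only at its
endpoint `d` and avoiding `x`, there is a negative cycle through the edge
`s(x,y)`. -/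
lemma theta_core {x y d : V} (σ : Sym2 V → ℤˣ) (c' : B.Walk x x) (hc : c'.IsCycle)
    (hsgn : wsign σ c' = -1)
    (hadj : B.Adj x y) (he : s(x, y) ∉ c'.edges)
    (q : B.Walk y d) (hq : q.IsPath) (hxq : x ∉ q.support)
    (hd : d ∈ c'.support) (hdx : d ≠ x)
    (hmin : ∀ z ∈ q.support, z ∈ c'.support → z = d) :
    ∃ D : B.Walk x x, D.IsCycle ∧ s(x, y) ∈ D.edges ∧ wsign σ D = -1 := by
  obtain ⟨b, h, p, rfl⟩ := SimpleGraph.Walk.not_nil_iff.mp hc.not_nil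
  obtain ⟨hp, hxb⟩ := (SimpleGraph.Walk.cons_isCycle_iff p h).mp hc
  have hdp : d ∈ p.support := by
    rcases (by simpa using hd : d = x ∨ d ∈ p.support) with rfl | h'
    · exact absurd rfl hdx
    · exact h'
  set t := p.takeUntil d hdp with ht_def
  set r := p.dropUntil d hdp with hr_def
  have hspec : t.append r = p := p.take_spec hdp
  have ht : t.IsPath := hp.takeUntil hdp
  have hr : r.IsPath := hp.dropUntil hdp
  have hpsup : p.support = t.support ++ r.support.tail := by
    conv_lhs => rw [← hspec]
    exact SimpleGraph.Walk.support_append t r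
  have hpnodup : p.support.Nodup := hp.support_nodup
  have hxr : x ∈ r.support.tail := by
    have hxmem : x ∈ r.support := r.end_mem_support
    rw [r.support_eq_cons] at hxmem
    rcases List.mem_cons.mp hxmem with hxm | hxm
    · exact absurd hxm.symm hdx
    · exact hxm
  have hxt : x ∉ t.support := by
    intro hx'
    rw [hpsup] at hpnodup
    exact (List.disjoint_of_nodup_append hpnodup) hx' hxr
  -- subsets of the cycle
  have hsupsub : ∀ z, z ∈ p.support → z ∈ (SimpleGraph.Walk.cons h p).support := by
    intro z hz; simp [SimpleGraph.Walk.support_cons, hz]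
  have hedgesub : ∀ e, e ∈ p.edges → e ∈ (SimpleGraph.Walk.cons h p).edges := by
    intro e he'; simp [SimpleGraph.Walk.edges_cons, he']
  have hrsub : ∀ z ∈ r.support, z ∈ (SimpleGraph.Walk.cons h p).support := fun z hz =>
    hsupsub z (p.support_dropUntil_subset hdp hz)
  have htsub : ∀ z ∈ t.support, z ∈ (SimpleGraph.Walk.cons h p).support := fun z hz =>
    hsupsub z (p.support_takeUntil_subset hdp hz)
  -- the two theta cycles
  have hA1 : (SimpleGraph.Walk.cons h t).IsPath := by
    rw [SimpleGraph.Walk.cons_isPath_iff]; exact ⟨ht, hxt⟩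
  have hqr : (q.append r).IsPath := by
    refine isPath_append hq hr fun z hz hz' => hmin z hz (hrsub z hz')
  have hqt : (q.append (SimpleGraph.Walk.cons h t).reverse).IsPath := by
    refine isPath_append hq hA1.reverse fun z hz hz' => ?_
    rw [SimpleGraph.Walk.support_reverse, List.mem_reverse,
      SimpleGraph.Walk.support_cons, List.mem_cons] at hz'
    rcases hz' with rfl | hz'
    · exact absurd hz hxq
    · exact hmin z hz (htsub z hz')
  have hexy_q : s(x, y) ∉ q.edges := fun h' => hxq (q.fst_mem_support_of_mem_edges h')
  have hcyc1 : (SimpleGraph.Walk.cons hadj (q.append r)).IsCycle := by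
    rw [SimpleGraph.Walk.cons_isCycle_iff]
    refine ⟨hqr, ?_⟩
    rw [SimpleGraph.Walk.edges_append, List.mem_append]
    rintro (h' | h')
    · exact hexy_q h'
    · exact he (hedgesub _ (p.edges_dropUntil_subset hdp h'))
  have hcyc2 : (SimpleGraph.Walk.cons hadj
      (q.append (SimpleGraph.Walk.cons h t).reverse)).IsCycle := by
    rw [SimpleGraph.Walk.cons_isCycle_iff]
    refine ⟨hqt, ?_⟩
    rw [SimpleGraph.Walk.edges_append, List.mem_append]
    rintro (h' | h')
    · exact hexy_q h'
    · rw [SimpleGraph.Walk.edges_reverse, List.mem_reverse,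
        SimpleGraph.Walk.edges_cons, List.mem_cons] at h'
      rcases h' with h' | h'
      · exact he (h' ▸ (by simp [SimpleGraph.Walk.edges_cons]))
      · exact he (hedgesub _ (p.edges_takeUntil_subset hdp h'))
  -- sign computation
  have hwp : wsign σ t * wsign σ r = wsign σ p := by
    rw [← wsign_append, hspec]
  have hprod : wsign σ (SimpleGraph.Walk.cons hadj (q.append r)) *
      wsign σ (SimpleGraph.Walk.cons hadj
        (q.append (SimpleGraph.Walk.cons h t).reverse)) = -1 := by
    rw [wsign_cons, wsign_cons, wsign_append, wsign_append, wsign_reverse, wsign_cons]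
    calc σ s(x, y) * (wsign σ q * wsign σ r) *
          (σ s(x, y) * (wsign σ q * (σ s(x, b) * wsign σ t)))
        = (σ s(x, y) * σ s(x, y)) * (wsign σ q * wsign σ q) *
          (σ s(x, b) * (wsign σ t * wsign σ r)) := by
            simp only [mul_comm, mul_assoc, mul_left_comm]
      _ = σ s(x, b) * wsign σ p := by
          rw [Int.units_mul_self, Int.units_mul_self, hwp]; simp
      _ = -1 := by rw [← wsign_cons h p]; exact hsgn
  rcases Int.units_eq_one_or (wsign σ (SimpleGraph.Walk.cons hadj (q.append r))) with h1 | h1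
  · refine ⟨_, hcyc2, by simp [SimpleGraph.Walk.edges_cons], ?_⟩
    rwa [h1, one_mul] at hprod
  · exact ⟨_, hcyc1, by simp [SimpleGraph.Walk.edges_cons], h1⟩

/-- Through every neighbor of a vertex on a negative cycle there is a
negative cycle. -/
lemma step_lemma (hB : IsBlock B) {x y : V} (hadj : B.Adj x y)
    (hx : ∃ (a : V) (c : B.Walk a a), c.IsCycle ∧ wsign σ c = -1 ∧ x ∈ c.support) :
    ∃ (a : V) (c : B.Walk a a), c.IsCycle ∧ wsign σ c = -1 ∧ y ∈ c.support := by
  classical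
  obtain ⟨a, c, hc, hsgn, hxs⟩ := hx
  have hc' : (c.rotate x hxs).IsCycle := hc.rotate hxs
  have hsgn' : wsign σ (c.rotate x hxs) = -1 := by rw [wsign_rotate]; exact hsgn
  by_cases hy : y ∈ (c.rotate x hxs).support
  · exact ⟨x, c.rotate x hxs, hc', hsgn', hy⟩
  have he : s(x, y) ∉ (c.rotate x hxs).edges := fun h' =>
    hy ((c.rotate x hxs).snd_mem_support_of_mem_edges h')
  -- get a target vertex on the cycle other than x
  obtain ⟨b, h, p, hcons⟩ := SimpleGraph.Walk.not_nil_iff.mp hc'.not_nil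
  have hb : b ∈ (c.rotate x hxs).support := by
    rw [hcons]; simp [SimpleGraph.Walk.support_cons]
  have hbx : b ≠ x := h.ne'
  have hyx : y ≠ x := fun h' => hy (h' ▸ (c.rotate x hxs).start_mem_support)
  -- walk from y to b in B - x
  have hyV : y ∈ ((⊤ : B.Subgraph).deleteVerts {x}).verts := by
    simp [SimpleGraph.Subgraph.deleteVerts_verts, SimpleGraph.Subgraph.verts_top, hyx]
  have hbV : b ∈ ((⊤ : B.Subgraph).deleteVerts {x}).verts := by
    simp [SimpleGraph.Subgraph.deleteVerts_verts, SimpleGraph.Subgraph.verts_top, hbx]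
  obtain ⟨W'⟩ := (hB.2 x).preconnected ⟨y, hyV⟩ ⟨b, hbV⟩
  have hxW : x ∉ (W'.map (SimpleGraph.Subgraph.hom _)).support := by
    rw [SimpleGraph.Walk.support_map]
    rintro hmem
    obtain ⟨z, hz, hzx⟩ := List.mem_map.mp hmem
    exact ((Set.mem_diff _).mp z.2).2 (Set.mem_singleton_iff.mpr hzx)
  obtain ⟨d, q0, hd, hsub0, hmin0⟩ :=
    exists_firstHit (· ∈ (c.rotate x hxs).support) (W'.map (SimpleGraph.Subgraph.hom _)) hb
  have hq : q0.bypass.IsPath := q0.bypass_isPath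
  have hqsub : ∀ z ∈ q0.bypass.support, z ∈ q0.support := fun z hz =>
    q0.support_bypass_subset hz
  have hxq : x ∉ q0.bypass.support := fun h' => hxW (hsub0 x (hqsub x h'))
  have hdx : d ≠ x := by
    intro h'
    exact hxW (h' ▸ hsub0 d q0.end_mem_support)
  have hmin : ∀ z ∈ q0.bypass.support, z ∈ (c.rotate x hxs).support → z = d := fun z hz =>
    hmin0 z (hqsub z hz)
  obtain ⟨D, hD, heD, hsD⟩ := theta_core σ (c.rotate x hxs) hc' hsgn' hadj he
    q0.bypass hq hxq hd hdx hmin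
  exact ⟨x, D, hD, hsD, D.snd_mem_support_of_mem_edges heD⟩

/-- Every vertex of the block lies on a negative cycle. -/
lemma reach_lemma (hB : IsBlock B) {x y : V} (W : B.Walk x y)
    (hx : ∃ (a : V) (c : B.Walk a a), c.IsCycle ∧ wsign σ c = -1 ∧ x ∈ c.support) :
    ∃ (a : V) (c : B.Walk a a), c.IsCycle ∧ wsign σ c = -1 ∧ y ∈ c.support := by
  induction W with
  | nil => exact hx
  | cons h W' ih => exact ih (step_lemma hB h hx)

end Aux

theorem degree_three_vertex_not_negative_battery {V : Type*} [DecidableEq V]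
    (B : SimpleGraph V) (σ : Sym2 V → ℤˣ) (hB : IsBlock B)
    -- the block `B` is unbalanced:
    (hunb : ∃ s : Finset (Sym2 V), IsCircleOf B s ∧ esign σ s = -1)
    (v : V) (hdeg : 3 ≤ {u : V | B.Adj v u}.ncard) :
    ∃ s₁ s₂ : Finset (Sym2 V), s₁ ≠ s₂ ∧
      (IsCircleOf B s₁ ∧ (∃ e ∈ s₁, v ∈ e) ∧ esign σ s₁ = -1) ∧
      (IsCircleOf B s₂ ∧ (∃ e ∈ s₂, v ∈ e) ∧ esign σ s₂ = -1) := by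
  classical
  -- convert the unbalancedness hypothesis to a negative cycle walk
  obtain ⟨s, ⟨a, w0, hw0, hs⟩, hsgn0⟩ := hunb
  have hwsgn0 : wsign σ w0 = -1 := by
    have h1 : esign σ s = wsign σ w0 := by
      rw [← hs, esign, List.prod_toFinset σ hw0.isCircuit.isTrail.edges_nodup]; rfl
    rw [← h1]; exact hsgn0
  -- transport negativity to a cycle through v
  obtain ⟨Wav⟩ := hB.1.preconnected a v
  obtain ⟨a', c, hc, hsgnc, hv⟩ := reach_lemma hB Wav
    ⟨a, w0, hw0, hwsgn0, w0.start_mem_support⟩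
  have hc' : (c.rotate v hv).IsCycle := hc.rotate hv
  have hsgn' : wsign σ (c.rotate v hv) = -1 := by rw [wsign_rotate]; exact hsgnc
  obtain ⟨b, hadj, p, hcons⟩ := SimpleGraph.Walk.not_nil_iff.mp hc'.not_nil
  rw [hcons] at hc' hsgn'
  obtain ⟨hp, hvb⟩ := (SimpleGraph.Walk.cons_isCycle_iff p hadj).mp hc'
  -- find a third edge at v not on the cycle
  obtain ⟨wit, hwit⟩ := incident_unique p hp
  have hnotsub : ¬ ({u : V | B.Adj v u} ⊆ {b, wit}) := by
    intro hsub
    have h2 : ({b, wit} : Set V).ncard ≤ 2 := by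
      have := Set.ncard_insert_le b ({wit} : Set V)
      simpa [Set.ncard_singleton] using this
    have h3 := Set.ncard_le_ncard hsub (Set.toFinite _)
    omega
  obtain ⟨u, hu, hub⟩ := Set.not_subset.mp hnotsub
  have hu' : B.Adj v u := hu
  have hub' : u ≠ b ∧ u ≠ wit := by
    constructor <;> intro h' <;> exact hub (by simp [h'])
  have he : s(v, u) ∉ (SimpleGraph.Walk.cons hadj p).edges := by
    rw [SimpleGraph.Walk.edges_cons, List.mem_cons]
    rintro (h' | h')
    · rw [Sym2.eq_iff] at h'
      rcases h' with ⟨-, h2⟩ | ⟨h1, -⟩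
      · exact hub'.1 h2
      · exact hadj.ne h1
    · exact hub'.2 (hwit u h')
  -- walk from u to b in B - v
  have hb : b ∈ (SimpleGraph.Walk.cons hadj p).support := by
    simp [SimpleGraph.Walk.support_cons]
  have huv : u ≠ v := hu'.ne'
  have hbv : b ≠ v := hadj.ne'
  have huV : u ∈ ((⊤ : B.Subgraph).deleteVerts {v}).verts := by
    simp [SimpleGraph.Subgraph.deleteVerts_verts, SimpleGraph.Subgraph.verts_top, huv]
  have hbV : b ∈ ((⊤ : B.Subgraph).deleteVerts {v}).verts := by
    simp [SimpleGraph.Subgraph.deleteVerts_verts, SimpleGraph.Subgraph.verts_top, hbv]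
  obtain ⟨W'⟩ := (hB.2 v).preconnected ⟨u, huV⟩ ⟨b, hbV⟩
  have hvW : v ∉ (W'.map (SimpleGraph.Subgraph.hom _)).support := by
    rw [SimpleGraph.Walk.support_map]
    rintro hmem
    obtain ⟨z, hz, hzv⟩ := List.mem_map.mp hmem
    exact ((Set.mem_diff _).mp z.2).2 (Set.mem_singleton_iff.mpr hzv)
  obtain ⟨d, q0, hd, hsub0, hmin0⟩ :=
    exists_firstHit (· ∈ (SimpleGraph.Walk.cons hadj p).support)
      (W'.map (SimpleGraph.Subgraph.hom _)) hb
  have hq : q0.bypass.IsPath := q0.bypass_isPath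
  have hqsub : ∀ z ∈ q0.bypass.support, z ∈ q0.support := fun z hz =>
    q0.support_bypass_subset hz
  have hvq : v ∉ q0.bypass.support := fun h' => hvW (hsub0 v (hqsub v h'))
  have hdv : d ≠ v := by
    intro h'
    exact hvW (h' ▸ hsub0 d q0.end_mem_support)
  have hmin : ∀ z ∈ q0.bypass.support,
      z ∈ (SimpleGraph.Walk.cons hadj p).support → z = d := fun z hz =>
    hmin0 z (hqsub z hz)
  obtain ⟨D, hD, heD, hsD⟩ := theta_core σ (SimpleGraph.Walk.cons hadj p) hc' hsgn'
    hu' he q0.bypass hq hvq hd hdv hmin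
  -- assemble the two negative circles
  refine ⟨(SimpleGraph.Walk.cons hadj p).edges.toFinset, D.edges.toFinset, ?_,
    ⟨⟨v, _, hc', rfl⟩, ⟨s(v, b), ?_, ?_⟩, ?_⟩,
    ⟨⟨v, D, hD, rfl⟩, ⟨s(v, u), ?_, ?_⟩, ?_⟩⟩
  · intro hEq
    apply he
    rw [← List.mem_toFinset, hEq, List.mem_toFinset]
    exact heD
  · rw [List.mem_toFinset, SimpleGraph.Walk.edges_cons]; exact List.mem_cons_self
  · exact Sym2.mem_mk_left v b
  · rw [esign, List.prod_toFinset σ hc'.isCircuit.isTrail.edges_nodup]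
    exact hsgn'
  · rw [List.mem_toFinset]; exact heD
  · exact Sym2.mem_mk_left v u
  · rw [esign, List.prod_toFinset σ hD.isCircuit.isTrail.edges_nodup]
    exact hsD
end
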